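/- arXiv:2602.12988 — 5 statements merged into one kernel-verified Lean document; each statement's English description precedes it below -/
import Mathlib

section
/- Let Q be a real d×d matrix all of whose complex eigenvalues have positive real part. Then there exists a constant B₁ > 0 (depending only on Q) such that for every x ∈ ℝ^d the integral P₁(x) = ∫₀¹ min(|s^Q x|, 1) ds/s is finite and satisfies P₁(x) ≤ B₁ · log(1 + |x|). -/
open MeasureTheory ProbabilityTheory Matrix Filter Topology

noncomputable section

/-- `s^Q = exp((log s) • Q)`, the matrix power given by the matrix exponential. -/
def mpow {d : ℕ} (Q : Matrix (Fin d) (Fin d) ℝ) (s : ℝ) : Matrix (Fin d) (Fin d) ℝ :=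
  NormedSpace.exp (Real.log s • Q)

/-- Action of the matrix power `s^Q` on Euclidean space by matrix-vector multiplication. -/
def mAct {d : ℕ} (Q : Matrix (Fin d) (Fin d) ℝ) (s : ℝ) (x : EuclideanSpace ℝ (Fin d)) :
    EuclideanSpace ℝ (Fin d) :=
  WithLp.toLp 2 ((mpow Q s).mulVec x)

/-- `Q ∈ M₊`: every complex eigenvalue of `Q` has positive real part. -/
def MPlus {d : ℕ} (Q : Matrix (Fin d) (Fin d) ℝ) : Prop :=
  ∀ z ∈ (Q.map (algebraMap ℝ ℂ)).charpoly.roots, 0 < z.re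

/-- `ν ∈ H`: a probability measure on `ℝ^d` with `∫_{‖x‖>1} log ‖x‖ ν(dx) < ∞`. -/
def ClassH {d : ℕ} (ν : Measure (EuclideanSpace ℝ (Fin d))) : Prop :=
  IsProbabilityMeasure ν ∧
    (∫⁻ x in {x : EuclideanSpace ℝ (Fin d) | 1 < ‖x‖}, ENNReal.ofReal (Real.log ‖x‖) ∂ν) < ⊤

/-- The uniform distribution on `[0,1]`. -/
def unif01 : Measure ℝ := volume.restrict (Set.Icc (0:ℝ) 1)

/-- The operator Dickman fixed-point equation `D(Q, ν)`: the law of `U^Q (X' + W)` equals `μ`,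
where `U ~ Unif[0,1]`, `X' ~ μ`, `W ~ ν` are mutually independent. -/
def IsOpDickman {d : ℕ} (Q : Matrix (Fin d) (Fin d) ℝ)
    (ν μ : Measure (EuclideanSpace ℝ (Fin d))) : Prop :=
  Measure.map (fun p : ℝ × (EuclideanSpace ℝ (Fin d) × EuclideanSpace ℝ (Fin d)) =>
      mAct Q p.1 (p.2.1 + p.2.2)) (unif01.prod (μ.prod ν)) = μ

/-- The scalar Dickman fixed-point equation `D((1/θ)I, ν)` on `ℝ^d`: the law of
`U^{1/θ} (X' + W)` equals `μ`, for `U ~ Unif[0,1]`, `X' ~ μ`, `W ~ ν` mutually independent. -/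
def IsScalarDickman {d : ℕ} (θ : ℝ) (ν μ : Measure (EuclideanSpace ℝ (Fin d))) : Prop :=
  Measure.map (fun p : ℝ × (EuclideanSpace ℝ (Fin d) × EuclideanSpace ℝ (Fin d)) =>
      p.1 ^ (1/θ) • (p.2.1 + p.2.2)) (unif01.prod (μ.prod ν)) = μ

/-- The characteristic function `μ̂(z) = ∫ e^{i z·x} μ(dx)` of a measure on `ℝ^d`. -/
def charFn {d : ℕ} (μ : Measure (EuclideanSpace ℝ (Fin d))) (z : EuclideanSpace ℝ (Fin d)) : ℂ :=
  ∫ x, Complex.exp (Complex.I * ((inner ℝ z x : ℝ) : ℂ)) ∂μ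


section Aux0

variable {d : ℕ}

private lemma mulVec_eq_zero_of_isUnit {M : Matrix (Fin d) (Fin d) ℂ} (h : IsUnit M)
    {u : Fin d → ℂ} (hu : M.mulVec u = 0) : u = 0 := by
  obtain ⟨v, hv⟩ := h
  rw [← hv] at hu
  have h2 : ((v⁻¹ : (Matrix (Fin d) (Fin d) ℂ)ˣ) : Matrix (Fin d) (Fin d) ℂ).mulVec
      ((v : Matrix (Fin d) (Fin d) ℂ).mulVec u) = u := by
    rw [Matrix.mulVec_mulVec, Units.inv_mul, Matrix.one_mulVec]
  rw [hu, Matrix.mulVec_zero] at h2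
  exact h2.symm

private lemma algebraMap_mulVec (c : ℂ) (u : Fin d → ℂ) :
    (algebraMap ℂ (Matrix (Fin d) (Fin d) ℂ) c).mulVec u = c • u := by
  rw [Algebra.algebraMap_eq_smul_one, Matrix.smul_mulVec, Matrix.one_mulVec]

private lemma spectrum_subset_roots (M : Matrix (Fin d) (Fin d) ℂ) {z : ℂ}
    (hz : z ∈ spectrum ℂ M) : z ∈ M.charpoly.roots := by
  rw [Polynomial.mem_roots']
  refine ⟨(Matrix.charpoly_monic M).ne_zero, ?_⟩
  rw [spectrum.mem_iff] at hz
  have hdet : M.charpoly.eval z = (algebraMap ℂ (Matrix (Fin d) (Fin d) ℂ) z - M).det := by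
    rw [Matrix.charpoly, eval_det, Matrix.matPolyEquiv_charmatrix, Polynomial.eval_sub,
      Polynomial.eval_X, Polynomial.eval_C]
    rfl
  rw [Polynomial.IsRoot, hdet]
  by_contra h0
  exact hz ((Matrix.isUnit_iff_isUnit_det _).mpr (isUnit_iff_ne_zero.mpr h0))


end Aux0

section Aux

open NormedSpace Set

attribute [local instance] Matrix.linftyOpNormedRing Matrix.linftyOpNormedAlgebra

variable {d : ℕ}

private lemma norm_exp_le (hd : 0 < d) (X : Matrix (Fin d) (Fin d) ℂ) :
    ‖NormedSpace.exp X‖ ≤ Real.exp ‖X‖ := by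
  haveI : Nonempty (Fin d) := ⟨⟨0, hd⟩⟩
  have h1 : Real.exp ‖X‖ = ∑' n : ℕ, ((n.factorial : ℝ))⁻¹ • ‖X‖ ^ n := by
    rw [Real.exp_eq_exp_ℝ, NormedSpace.exp_eq_tsum ℝ]
  have hnorm : Summable fun n : ℕ => ‖((n.factorial : ℂ))⁻¹ • X ^ n‖ :=
    NormedSpace.norm_expSeries_summable' (𝕂 := ℂ) X
  have h2 : ‖exp X‖ ≤ ∑' n : ℕ, ‖((n.factorial : ℂ))⁻¹ • X ^ n‖ := by
    rw [NormedSpace.exp_eq_tsum ℂ]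
    exact norm_tsum_le_tsum_norm hnorm
  refine h2.trans ?_
  rw [h1]
  apply Summable.tsum_le_tsum ?_ hnorm (NormedSpace.expSeries_summable' (𝕂 := ℝ) ‖X‖)
  intro n
  rw [norm_smul, norm_inv, Complex.norm_natCast, smul_eq_mul]
  apply mul_le_mul_of_nonneg_left (norm_pow_le X n) (by positivity)

private lemma exp_sub_one_factor (P : Matrix (Fin d) (Fin d) ℂ) :
    ∃ G : Matrix (Fin d) (Fin d) ℂ, Commute P G ∧ exp P = 1 + P * G := by
  have hsumm : Summable fun n : ℕ => (((n+1).factorial : ℂ))⁻¹ • P ^ n := by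
    apply Summable.of_norm_bounded (NormedSpace.norm_expSeries_summable' (𝕂 := ℂ) P)
    intro n
    rw [norm_smul, norm_smul]
    apply mul_le_mul_of_nonneg_right ?_ (norm_nonneg _)
    rw [norm_inv, norm_inv, Complex.norm_natCast, Complex.norm_natCast]
    apply inv_anti₀
    · exact_mod_cast Nat.factorial_pos n
    · exact_mod_cast Nat.factorial_le (Nat.le_succ n)
  set G := ∑' n : ℕ, (((n+1).factorial : ℂ))⁻¹ • P ^ n with hGdef
  have hterm : ∀ n : ℕ, P * ((((n+1).factorial : ℂ))⁻¹ • P ^ n)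
      = (((n+1).factorial : ℂ))⁻¹ • P ^ (n+1) := by
    intro n
    rw [mul_smul_comm, pow_succ']
  have htermr : ∀ n : ℕ, ((((n+1).factorial : ℂ))⁻¹ • P ^ n) * P
      = (((n+1).factorial : ℂ))⁻¹ • P ^ (n+1) := by
    intro n
    rw [smul_mul_assoc, pow_succ]
  have hcomm : Commute P G := by
    show P * G = G * P
    rw [hGdef, ← hsumm.tsum_mul_left P, ← hsumm.tsum_mul_right P]
    exact tsum_congr fun n => (hterm n).trans (htermr n).symm
  refine ⟨G, hcomm, ?_⟩
  have hs2 : Summable fun n : ℕ => ((n.factorial : ℂ))⁻¹ • P ^ n :=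
    NormedSpace.expSeries_summable' (𝕂 := ℂ) P
  have hE : exp P = ∑' n : ℕ, ((n.factorial : ℂ))⁻¹ • P ^ n := by
    rw [NormedSpace.exp_eq_tsum ℂ]
  rw [hE, hs2.tsum_eq_zero_add]
  congr 1
  · simp
  · rw [← hsumm.tsum_mul_left P]
    exact tsum_congr fun n => (hterm n).symm

private lemma eigen_of_max_ne_bot {f : Module.End ℂ (Fin d → ℂ)} {lam : ℂ}
    (h : f.maxGenEigenspace lam ≠ ⊥) : ∃ u : Fin d → ℂ, u ≠ 0 ∧ f u = lam • u := by
  obtain ⟨w, hw, hw0⟩ := Submodule.exists_mem_ne_zero_of_ne_bot h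
  obtain ⟨k, hk⟩ := (Module.End.mem_maxGenEigenspace f lam w).mp hw
  clear hw h
  induction k generalizing w with
  | zero =>
    simp only [pow_zero, Module.End.one_apply] at hk
    exact absurd hk hw0
  | succ k ih =>
    by_cases hw' : (f - lam • 1) w = 0
    · refine ⟨w, hw0, ?_⟩
      have h2 : f w - lam • w = 0 := by
        simpa [LinearMap.sub_apply, LinearMap.smul_apply, Module.End.one_apply] using hw'
      exact sub_eq_zero.mp h2
    · apply ih ((f - lam • 1) w) hw'
      rw [← Module.End.mul_apply, ← pow_succ]
      exact hk
private lemma exists_spectrum_exp (N : Matrix (Fin d) (Fin d) ℂ) {μ : ℂ}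
    (hμ : μ ∈ spectrum ℂ (NormedSpace.exp N)) : ∃ z ∈ spectrum ℂ N, Complex.exp z = μ := by
  by_contra hcon
  push_neg at hcon
  set f : Module.End ℂ (Fin d → ℂ) := Matrix.toLinAlgEquiv' N with hf
  set S : Matrix (Fin d) (Fin d) ℂ := algebraMap ℂ _ μ - NormedSpace.exp N with hS
  apply spectrum.mem_iff.mp hμ
  -- it suffices to prove surjectivity of the associated endomorphism
  have hrange : ∀ lam : ℂ, f.maxGenEigenspace lam ≤ LinearMap.range (Matrix.toLinAlgEquiv' S) := by
    intro lam
    by_cases hbot : f.maxGenEigenspace lam = ⊥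
    · rw [hbot]; exact bot_le
    · obtain ⟨u0, hu00, hu0e⟩ := eigen_of_max_ne_bot hbot
      have hNu : N.mulVec u0 = lam • u0 := by
        rwa [hf, Matrix.toLinAlgEquiv'_apply] at hu0e
      have hlam : lam ∈ spectrum ℂ N := by
        rw [spectrum.mem_iff]
        intro hun
        apply hu00
        apply mulVec_eq_zero_of_isUnit hun
        rw [Matrix.sub_mulVec, hNu, algebraMap_mulVec, sub_self]
      have hne : Complex.exp lam ≠ μ := hcon lam hlam
      -- commutation
      have hcommMat : Commute N S := by
        apply Commute.sub_right
        · exact (Algebra.commutes μ N).symm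
        · exact (Commute.refl N).exp_right
      have hcomm : Commute f (Matrix.toLinAlgEquiv' S) := by
        rw [hf]
        exact hcommMat.map
          (Matrix.toLinAlgEquiv' : Matrix (Fin d) (Fin d) ℂ ≃ₐ[ℂ] Module.End ℂ (Fin d → ℂ))
      have hmaps := Module.End.mapsTo_maxGenEigenspace_of_comm hcomm lam
      set g := (Matrix.toLinAlgEquiv' S).restrict hmaps with hg
      have hginj : Function.Injective g := by
        rw [← LinearMap.ker_eq_bot, Submodule.eq_bot_iff]
        rintro ⟨u, hu⟩ hker
        have hSu : S.mulVec u = 0 := by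
          have : Matrix.toLinAlgEquiv' S u = 0 := by
            have := congrArg (Subtype.val) hker
            exact this
          rwa [Matrix.toLinAlgEquiv'_apply] at this
        -- generalized eigenvector data
        obtain ⟨k, hk⟩ := (Module.End.mem_maxGenEigenspace f lam u).mp hu
        set P : Matrix (Fin d) (Fin d) ℂ := N - algebraMap ℂ _ lam with hP
        have hPk : (P ^ k).mulVec u = 0 := by
          have hPend : Matrix.toLinAlgEquiv' (P ^ k) = (f - lam • 1) ^ k := by
            rw [map_pow, map_sub, hf]
            congr 1
            rw [AlgEquiv.commutes]
            rw [Module.algebraMap_end_eq_smul_id]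
            rfl
          have := congrArg (fun (T : Module.End ℂ (Fin d → ℂ)) => T u) hPend
          rw [Matrix.toLinAlgEquiv'_apply] at this
          rw [this, hk]
        obtain ⟨G, hPG, hexpP⟩ := exp_sub_one_factor P
        have hexpN : NormedSpace.exp N
            = algebraMap ℂ _ (Complex.exp lam) * NormedSpace.exp P := by
          have hsplit : N = algebraMap ℂ (Matrix (Fin d) (Fin d) ℂ) lam + P := by
            rw [hP]; abel
          rw [hsplit, Matrix.exp_add_of_commute _ _ (Algebra.commutes lam P)]
          congr 1
          rw [Complex.exp_eq_exp_ℂ]; exact (NormedSpace.algebraMap_exp_comm lam).symm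
        -- derive the eigen-relation for (P*G)
        have heq : (Complex.exp lam) • (u + (P * G).mulVec u) = μ • u := by
          have h2 : S.mulVec u
              = μ • u - (Complex.exp lam) • (u + (P * G).mulVec u) := by
            rw [hS, Matrix.sub_mulVec, algebraMap_mulVec, hexpN]
            congr 1
            rw [← Matrix.mulVec_mulVec, algebraMap_mulVec, hexpP, Matrix.add_mulVec,
              Matrix.one_mulVec]
          rw [hSu] at h2
          exact (sub_eq_zero.mp h2.symm).symm
        have he0 : Complex.exp lam ≠ 0 := Complex.exp_ne_zero lam
        set c : ℂ := (Complex.exp lam)⁻¹ * (μ - Complex.exp lam) with hc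
        have hcne : c ≠ 0 :=
          mul_ne_zero (inv_ne_zero he0) (sub_ne_zero.mpr (Ne.symm hne))
        have h3 : (Complex.exp lam) • ((P * G).mulVec u) = (μ - Complex.exp lam) • u := by
          rw [smul_add] at heq
          rw [sub_smul]
          exact eq_sub_of_add_eq' heq
        have hy : (P * G).mulVec u = c • u := by
          calc (P * G).mulVec u = (1 : ℂ) • (P * G).mulVec u := (one_smul ℂ _).symm
            _ = ((Complex.exp lam)⁻¹ * Complex.exp lam) • (P * G).mulVec u := by
                rw [inv_mul_cancel₀ he0]
            _ = (Complex.exp lam)⁻¹ • ((Complex.exp lam) • (P * G).mulVec u) := mul_smul _ _ _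
            _ = (Complex.exp lam)⁻¹ • ((μ - Complex.exp lam) • u) := by rw [h3]
            _ = c • u := (mul_smul _ _ _).symm
        have hiter : ∀ m : ℕ, ((P * G) ^ m).mulVec u = c ^ m • u := by
          intro m
          induction m with
          | zero => simp [Matrix.one_mulVec]
          | succ m ih =>
            rw [pow_succ', ← Matrix.mulVec_mulVec, ih, Matrix.mulVec_smul, hy, smul_smul,
              pow_succ]
        have hzero : ((P * G) ^ k).mulVec u = 0 := by
          have hps : (P * G) ^ k = G ^ k * P ^ k := by
            rw [hPG.eq, (hPG.symm).mul_pow]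
          rw [hps, ← Matrix.mulVec_mulVec, hPk, Matrix.mulVec_zero]
        have huz : u = 0 := by
          have h4 := hiter k
          rw [hzero] at h4
          rcases smul_eq_zero.mp h4.symm with h5 | h5
          · exact absurd h5 (pow_ne_zero _ hcne)
          · exact h5
        exact Subtype.ext huz
      have hgsurj : Function.Surjective g := LinearMap.injective_iff_surjective.mp hginj
      intro w hw
      obtain ⟨⟨u, hu⟩, hgu⟩ := hgsurj ⟨w, hw⟩
      refine ⟨u, ?_⟩
      have := congrArg Subtype.val hgu
      exact this
  have hsurj : Function.Surjective (Matrix.toLinAlgEquiv' S) := by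
    rw [← LinearMap.range_eq_top, ← top_le_iff, ← Module.End.iSup_maxGenEigenspace_eq_top f]
    exact iSup_le hrange
  have hbij : Function.Bijective (Matrix.toLinAlgEquiv' S) :=
    ⟨LinearMap.injective_iff_surjective.mpr hsurj, hsurj⟩
  have hunit : IsUnit ((Matrix.toLinAlgEquiv' S : Module.End ℂ (Fin d → ℂ))) :=
    (Module.End.isUnit_iff _).mpr hbij
  have := hunit.map (Matrix.toLinAlgEquiv'.symm : _ ≃ₐ[ℂ] Matrix (Fin d) (Fin d) ℂ)
  simpa using this
private lemma exp_decay (hd : 0 < d) (N : Matrix (Fin d) (Fin d) ℂ) {b : ℝ} (hb : 0 < b)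
    (hspec : ∀ z ∈ spectrum ℂ N, b ≤ z.re) :
    ∃ C : ℝ, 0 < C ∧ ∀ t : ℝ, 0 ≤ t →
      ‖NormedSpace.exp ((-(t : ℂ)) • N)‖ ≤ C * Real.exp (-(b / 2) * t) := by
  haveI : Nonempty (Fin d) := ⟨⟨0, hd⟩⟩
  haveI : Nontrivial (Matrix (Fin d) (Fin d) ℂ) := by infer_instance
  set E : Matrix (Fin d) (Fin d) ℂ := NormedSpace.exp (-N) with hE
  set ρ : NNReal := Real.toNNReal (Real.exp (-(b / 2))) with hρ
  have hρR : (ρ : ℝ) = Real.exp (-(b / 2)) := Real.coe_toNNReal _ (Real.exp_pos _).le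
  -- all spectrum elements are strictly inside ρ
  have hsp : ∀ μ ∈ spectrum ℂ E, ‖μ‖₊ < ρ := by
    intro μ hμ
    obtain ⟨z, hzmem, hz⟩ := exists_spectrum_exp (-N) hμ
    have hwz : -z ∈ spectrum ℂ N := by
      rw [← spectrum.neg_eq] at hzmem
      exact Set.mem_neg.mp hzmem
    have hre : z.re ≤ -b := by
      have := hspec _ hwz
      simp only [Complex.neg_re] at this
      linarith
    have : ‖μ‖ = Real.exp z.re := by
      rw [← hz, Complex.norm_exp]
    rw [← NNReal.coe_lt_coe, coe_nnnorm, hρR, this]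
    apply Real.exp_lt_exp.mpr
    linarith
  have hrad : spectralRadius ℂ E < (ρ : ENNReal) :=
    spectrum.spectralRadius_lt_of_forall_lt E hsp
  have htend := spectrum.pow_nnnorm_pow_one_div_tendsto_nhds_spectralRadius E
  have hev : ∀ᶠ n : ℕ in atTop, ((‖E ^ n‖₊ : ENNReal) ^ (1 / (n:ℝ))) < (ρ : ENNReal) :=
    htend.eventually_lt_const hrad
  obtain ⟨N₀, hN₀⟩ := eventually_atTop.mp hev
  set N₁ : ℕ := max N₀ 1 with hN₁
  have hpow : ∀ n : ℕ, N₁ ≤ n → ‖E ^ n‖ ≤ Real.exp (-(b / 2)) ^ n := by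
    intro n hn
    have hn1 : 1 ≤ n := le_trans (le_max_right _ _) hn
    have hx := hN₀ n (le_trans (le_max_left _ _) hn)
    have hnne : (n : ℝ) ≠ 0 := by positivity
    have h2 : ((‖E ^ n‖₊ : ENNReal) ^ (1 / (n:ℝ))) ^ (n : ℝ) < (ρ : ENNReal) ^ (n : ℝ) := by
      apply ENNReal.rpow_lt_rpow hx (by positivity)
    rw [← ENNReal.rpow_mul, one_div, inv_mul_cancel₀ hnne, ENNReal.rpow_one] at h2
    rw [ENNReal.rpow_natCast, ← ENNReal.coe_pow, ENNReal.coe_lt_coe] at h2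
    have h3 : (‖E ^ n‖₊ : ℝ) ≤ ((ρ ^ n : NNReal) : ℝ) := by exact_mod_cast h2.le
    rw [coe_nnnorm] at h3
    rw [← hρR]
    exact h3.trans_eq (by push_cast; ring)
  -- the constant
  set C : ℝ := Real.exp ((N₁ + 1) * (‖N‖ + b / 2) + 1) with hC
  refine ⟨C, Real.exp_pos _, ?_⟩
  intro t ht
  set n : ℕ := ⌊t⌋₊ with hn
  have hnt : (n : ℝ) ≤ t := Nat.floor_le ht
  have htn : t < n + 1 := Nat.lt_floor_add_one t
  have h12 : Commute ((n : ℕ) • (-N)) ((-(t - (n:ℝ)) : ℝ) • N) :=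
    (((Commute.refl N).neg_left.smul_right _).smul_left _)
  have hsplitexp : NormedSpace.exp ((-(t:ℂ)) • N)
      = E ^ n * NormedSpace.exp ((-(t - (n:ℝ)) : ℝ) • N) := by
    have h1 : ((-(t:ℂ)) • N) = ((n : ℕ) • (-N)) + ((-(t - (n:ℝ)) : ℝ) • N) := by
      rw [← Nat.cast_smul_eq_nsmul ℂ, smul_neg, ← neg_smul]
      have h2 : ((-(t - (n:ℝ)) : ℝ) • N) = ((-(t - (n:ℝ)) : ℝ) : ℂ) • N := by
        rw [← algebraMap_smul ℂ (-(t - (n:ℝ)) : ℝ) N]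
        rfl
      rw [h2, ← add_smul]
      congr 1
      push_cast
      ring
    rw [h1, Matrix.exp_add_of_commute _ _ h12, Matrix.exp_nsmul]
  have hnormsmul : ∀ r : ℝ, ‖(r • N : Matrix (Fin d) (Fin d) ℂ)‖ = |r| * ‖N‖ := by
    intro r
    rw [norm_smul, Real.norm_eq_abs]
  have hrest : ‖NormedSpace.exp ((-(t - (n:ℝ)) : ℝ) • N)‖ ≤ Real.exp ‖N‖ := by
    refine (norm_exp_le hd _).trans ?_
    apply Real.exp_le_exp.mpr
    rw [hnormsmul]
    have h1 : |(-(t - (n:ℝ)))| ≤ 1 := by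
      rw [abs_neg, abs_of_nonneg (by linarith)]
      linarith
    nlinarith [norm_nonneg N]
  have hNb : (0:ℝ) ≤ ‖N‖ + b / 2 := by positivity
  have hN₁1 : (1:ℝ) ≤ (N₁ : ℝ) := by exact_mod_cast le_max_right N₀ 1
  rcases le_or_gt N₁ n with hcase | hcase
  · have h1 := hpow n hcase
    calc ‖NormedSpace.exp ((-(t:ℂ)) • N)‖
        ≤ ‖E ^ n‖ * ‖NormedSpace.exp ((-(t - (n:ℝ)) : ℝ) • N)‖ := by
          rw [hsplitexp]; exact norm_mul_le _ _
      _ ≤ Real.exp (-(b/2)) ^ n * Real.exp ‖N‖ :=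
          mul_le_mul h1 hrest (norm_nonneg _) (by positivity)
      _ = Real.exp ((n:ℝ) * (-(b/2)) + ‖N‖) := by
          rw [Real.exp_add, Real.exp_nat_mul]
      _ ≤ C * Real.exp (-(b / 2) * t) := by
          rw [hC, ← Real.exp_add]
          apply Real.exp_le_exp.mpr
          have hnt1 : t - 1 ≤ (n:ℝ) := by linarith
          nlinarith [norm_nonneg N]
  · have htN : t ≤ (N₁ : ℝ) + 1 := by
      have : (n:ℝ) + 1 ≤ (N₁:ℝ) + 1 := by
        have : (n:ℝ) ≤ (N₁:ℝ) := by exact_mod_cast hcase.le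
        linarith
      linarith
    have h2 : ((-t : ℝ) • N : Matrix (Fin d) (Fin d) ℂ) = (-(t:ℂ)) • N := by
      rw [← algebraMap_smul ℂ (-t : ℝ) N]
      congr 1
      simp [Complex.coe_algebraMap]
    calc ‖NormedSpace.exp ((-(t:ℂ)) • N)‖
        ≤ Real.exp ‖((-t : ℝ) • N : Matrix (Fin d) (Fin d) ℂ)‖ := by
          rw [h2]; exact norm_exp_le hd _
      _ = Real.exp (t * ‖N‖) := by
          rw [hnormsmul, abs_neg, abs_of_nonneg ht]
      _ ≤ C * Real.exp (-(b / 2) * t) := by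
          rw [hC, ← Real.exp_add]
          apply Real.exp_le_exp.mpr
          nlinarith [norm_nonneg N]
private def matCLM (d : ℕ) : Matrix (Fin d) (Fin d) ℝ →L[ℝ]
    (EuclideanSpace ℝ (Fin d) →L[ℝ] EuclideanSpace ℝ (Fin d)) :=
  LinearMap.toContinuousLinearMap
    ((LinearMap.toContinuousLinearMap :
        (EuclideanSpace ℝ (Fin d) →ₗ[ℝ] EuclideanSpace ℝ (Fin d)) ≃ₗ[ℝ]
        (EuclideanSpace ℝ (Fin d) →L[ℝ] EuclideanSpace ℝ (Fin d))).toLinearMap ∘ₗ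
      (Matrix.toEuclideanLin :
        Matrix (Fin d) (Fin d) ℝ ≃ₗ[ℝ]
        (EuclideanSpace ℝ (Fin d) →ₗ[ℝ] EuclideanSpace ℝ (Fin d))).toLinearMap)

private lemma matCLM_apply (M : Matrix (Fin d) (Fin d) ℝ) (x : EuclideanSpace ℝ (Fin d)) :
    matCLM d M x = M.mulVec x := rfl

private lemma norm_map_coe (M : Matrix (Fin d) (Fin d) ℝ) :
    ‖M.map (algebraMap ℝ ℂ)‖ = ‖M‖ := by
  rw [← coe_nnnorm, ← coe_nnnorm]
  congr 1
  rw [Matrix.linfty_opNNNorm_def, Matrix.linfty_opNNNorm_def]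
  congr 1
  funext i
  apply Finset.sum_congr rfl
  intro j _
  simp [Matrix.map_apply]

private lemma map_mpow (Q : Matrix (Fin d) (Fin d) ℝ) (s : ℝ) :
    (mpow Q s).map (algebraMap ℝ ℂ)
      = NormedSpace.exp (((Real.log s : ℝ) : ℂ) • Q.map (algebraMap ℝ ℂ)) := by
  let φL : Matrix (Fin d) (Fin d) ℝ →ₗ[ℝ] Matrix (Fin d) (Fin d) ℂ :=
    { toFun := fun M => M.map (algebraMap ℝ ℂ)
      map_add' := fun M N => by ext i j; simp [Matrix.map_apply]
      map_smul' := fun r M => by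
        ext i j
        simp [Matrix.map_apply, Matrix.smul_apply, Complex.real_smul,
          Complex.coe_algebraMap, smul_eq_mul] }
  have hφcont : Continuous (fun M : Matrix (Fin d) (Fin d) ℝ => M.map (algebraMap ℝ ℂ)) :=
    φL.continuous_of_finiteDimensional
  have h1 : (mpow Q s).map (algebraMap ℝ ℂ)
      = NormedSpace.exp ((Real.log s • Q).map (algebraMap ℝ ℂ)) := by
    rw [mpow]
    exact NormedSpace.map_exp ((algebraMap ℝ ℂ).mapMatrix) hφcont _
  rw [h1]
  congr 1
  ext i j
  simp only [Matrix.map_apply, Matrix.smul_apply, smul_eq_mul, Complex.real_smul,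
    Complex.coe_algebraMap]
  push_cast
  ring

private lemma mAct_le (hd : 0 < d) (Q : Matrix (Fin d) (Fin d) ℝ) (hQ : MPlus Q) :
    ∃ a C₂ : ℝ, 0 < a ∧ 1 ≤ C₂ ∧ ∀ (x : EuclideanSpace ℝ (Fin d)), ∀ s ∈ Ioc (0:ℝ) 1,
      ‖mAct Q s x‖ ≤ C₂ * s ^ a * ‖x‖ := by
  set Qc := Q.map (algebraMap ℝ ℂ) with hQc
  -- a positive lower bound for real parts of roots
  obtain ⟨b, hb0, hroots⟩ : ∃ b : ℝ, 0 < b ∧ ∀ z ∈ Qc.charpoly.roots, b ≤ z.re := by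
    rcases Finset.eq_empty_or_nonempty ((Qc.charpoly.roots.map Complex.re).toFinset)
      with hFe | hFne
    · refine ⟨1, one_pos, fun z hz => ?_⟩
      exfalso
      have h5 : z.re ∈ (Qc.charpoly.roots.map Complex.re).toFinset := by
        rw [Multiset.mem_toFinset]
        exact Multiset.mem_map_of_mem _ hz
      rw [hFe] at h5
      exact absurd h5 (Finset.notMem_empty _)
    · refine ⟨(Qc.charpoly.roots.map Complex.re).toFinset.min' hFne, ?_, ?_⟩
      · obtain ⟨z, hz, hze⟩ := Multiset.mem_map.mp (Multiset.mem_toFinset.mp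
          (Finset.min'_mem _ hFne))
        have := hQ z hz
        rwa [hze] at this
      · intro z hz
        apply Finset.min'_le
        rw [Multiset.mem_toFinset]
        exact Multiset.mem_map_of_mem _ hz
  have hspec : ∀ z ∈ spectrum ℂ Qc, b ≤ z.re := fun z hz =>
    hroots z (spectrum_subset_roots Qc hz)
  obtain ⟨C, hC0, hdecay⟩ := exp_decay hd Qc hb0 hspec
  set κ := @Norm.norm (Matrix (Fin d) (Fin d) ℝ →L[ℝ] (EuclideanSpace ℝ (Fin d) →L[ℝ] EuclideanSpace ℝ (Fin d))) ContinuousLinearMap.hasOpNorm (matCLM d) with hκ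
  refine ⟨b / 2, max 1 (κ * C), by positivity, le_max_left _ _, ?_⟩
  intro x s hs
  have hs0 : 0 < s := hs.1
  have hlog : Real.log s ≤ 0 := Real.log_nonpos hs0.le hs.2
  set t : ℝ := -Real.log s with htdef
  have ht0 : 0 ≤ t := by rw [htdef]; linarith
  have h1 : ‖mAct Q s x‖ ≤ κ * ‖mpow Q s‖ * ‖x‖ := by
    have h0 : mAct Q s x = matCLM d (mpow Q s) x := rfl
    rw [h0]
    calc ‖matCLM d (mpow Q s) x‖ ≤ ‖matCLM d (mpow Q s)‖ * ‖x‖ :=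
        ContinuousLinearMap.le_opNorm _ _
      _ ≤ κ * ‖mpow Q s‖ * ‖x‖ :=
        mul_le_mul_of_nonneg_right (ContinuousLinearMap.le_opNorm _ _) (norm_nonneg x)
  have h2 : ‖mpow Q s‖ = ‖NormedSpace.exp ((-(t : ℂ)) • Qc)‖ := by
    rw [← norm_map_coe, map_mpow]
    congr 3
    rw [htdef]
    push_cast
    ring
  have h3 : ‖mpow Q s‖ ≤ C * s ^ (b / 2) := by
    rw [h2]
    refine (hdecay t ht0).trans_eq ?_
    congr 1
    rw [Real.rpow_def_of_pos hs0, htdef]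
    ring_nf
  calc ‖mAct Q s x‖ ≤ κ * ‖mpow Q s‖ * ‖x‖ := h1
    _ ≤ κ * (C * s ^ (b / 2)) * ‖x‖ := by
        apply mul_le_mul_of_nonneg_right ?_ (norm_nonneg x)
        exact mul_le_mul_of_nonneg_left h3 (by rw [hκ]; exact ContinuousLinearMap.opNorm_nonneg _)
    _ = (κ * C) * s ^ (b / 2) * ‖x‖ := by ring
    _ ≤ max 1 (κ * C) * s ^ (b / 2) * ‖x‖ := by
        apply mul_le_mul_of_nonneg_right ?_ (norm_nonneg x)
        apply mul_le_mul_of_nonneg_right (le_max_right _ _) (by positivity)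

private lemma mAct_continuousOn (Q : Matrix (Fin d) (Fin d) ℝ) (x : EuclideanSpace ℝ (Fin d)) :
    ContinuousOn (fun s => mAct Q s x) (Ioc (0:ℝ) 1) := by
  have hmp : ContinuousOn (fun s => mpow Q s) (Ioc (0:ℝ) 1) := by
    apply NormedSpace.exp_continuous.comp_continuousOn
    apply ContinuousOn.fun_smul ?_ continuousOn_const
    apply Real.continuousOn_log.mono
    intro s hs
    exact ne_of_gt hs.1
  have : (fun s => mAct Q s x)
      = fun s => (ContinuousLinearMap.apply ℝ (EuclideanSpace ℝ (Fin d)) x).comp (matCLM d)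
          (mpow Q s) := rfl
  rw [this]
  exact ((ContinuousLinearMap.apply ℝ (EuclideanSpace ℝ (Fin d)) x).comp
    (matCLM d)).continuous.comp_continuousOn hmp

end Aux

section Integral

open Set

/-- The basic integral estimate. -/
private lemma integral_min_bound {a K : ℝ} (ha : 0 < a) (hK : 0 ≤ K)
    (f : ℝ → ℝ) (hfc : ContinuousOn f (Set.Ioc 0 1))
    (hf0 : ∀ s ∈ Set.Ioc (0:ℝ) 1, 0 ≤ f s)
    (hfK : ∀ s ∈ Set.Ioc (0:ℝ) 1, f s ≤ K * s ^ a)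
    (hf1 : ∀ s ∈ Set.Ioc (0:ℝ) 1, f s ≤ 1) :
    IntegrableOn (fun s => f s / s) (Set.Ioc 0 1) volume ∧
    (∫ s in Set.Ioc (0:ℝ) 1, f s / s) ≤ K / a ∧
    (1 < K → (∫ s in Set.Ioc (0:ℝ) 1, f s / s) ≤ 1 / a + 1 / a * Real.log K) := by
  set g : ℝ → ℝ := fun s => K * s ^ (a - 1) with hgdef
  have hg_int1 : IntegrableOn g (Set.Ioc 0 1) volume := by
    have h1 : IntervalIntegrable (fun s : ℝ => s ^ (a - 1)) volume 0 1 :=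
      intervalIntegral.intervalIntegrable_rpow' (by linarith)
    exact ((intervalIntegrable_iff_integrableOn_Ioc_of_le zero_le_one).mp h1).const_mul K
  have hbound : ∀ s ∈ Set.Ioc (0:ℝ) 1, f s / s ≤ g s := by
    intro s hs
    have hs0 : 0 < s := hs.1
    calc f s / s ≤ K * s ^ a / s := (div_le_div_iff_of_pos_right hs0).mpr (hfK s hs)
      _ = K * s ^ (a - 1) := by
          rw [mul_div_assoc]
          congr 1
          rw [Real.rpow_sub hs0, Real.rpow_one]
  have hnn : ∀ s ∈ Set.Ioc (0:ℝ) 1, 0 ≤ f s / s := fun s hs =>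
    div_nonneg (hf0 s hs) hs.1.le
  have hmeas : AEStronglyMeasurable (fun s => f s / s) (volume.restrict (Set.Ioc (0:ℝ) 1)) := by
    apply ContinuousOn.aestronglyMeasurable ?_ measurableSet_Ioc
    exact hfc.div continuousOn_id (fun s hs => ne_of_gt hs.1)
  have hint : IntegrableOn (fun s => f s / s) (Set.Ioc 0 1) volume := by
    apply Integrable.mono' hg_int1 hmeas
    rw [ae_restrict_iff' measurableSet_Ioc]
    filter_upwards with s
    intro hs
    rw [Real.norm_eq_abs, abs_of_nonneg (hnn s hs)]
    exact hbound s hs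
  have hrint : ∀ c : ℝ, 0 < c → (∫ s in Set.Ioc (0:ℝ) c, s ^ (a - 1)) = c ^ a / a := by
    intro c hc0
    rw [← intervalIntegral.integral_of_le hc0.le]
    rw [integral_rpow (Or.inl (by linarith))]
    have h1 : a - 1 + 1 = a := by ring
    rw [h1, Real.zero_rpow (by linarith : a ≠ 0), sub_zero]
  have hgcalc : ∀ c : ℝ, 0 < c → (∫ s in Set.Ioc (0:ℝ) c, g s) = K * (c ^ a / a) := by
    intro c hc0
    rw [hgdef]
    simp only
    rw [integral_const_mul, hrint c hc0]
  refine ⟨hint, ?_, ?_⟩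
  · calc (∫ s in Set.Ioc (0:ℝ) 1, f s / s) ≤ ∫ s in Set.Ioc (0:ℝ) 1, g s :=
        setIntegral_mono_on hint hg_int1 measurableSet_Ioc hbound
      _ = K * (1 ^ a / a) := hgcalc 1 one_pos
      _ = K / a := by rw [Real.one_rpow]; ring
  · intro hK1
    have hK0' : (0:ℝ) < K := lt_trans one_pos hK1
    set ε : ℝ := K ^ (-1 / a) with hεdef
    have hε0 : 0 < ε := Real.rpow_pos_of_pos hK0' _
    have hε1 : ε ≤ 1 :=
      Real.rpow_le_one_of_one_le_of_nonpos hK1.le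
        (by rw [neg_div]; exact neg_nonpos.mpr (by positivity))
    have hεa : ε ^ a = K⁻¹ := by
      rw [hεdef, ← Real.rpow_mul hK0'.le]
      have : -1 / a * a = -1 := by field_simp
      rw [this, Real.rpow_neg_one]
    have hsplit : Set.Ioc (0:ℝ) ε ∪ Set.Ioc ε 1 = Set.Ioc (0:ℝ) 1 :=
      Set.Ioc_union_Ioc_eq_Ioc hε0.le hε1
    have hsub1 : Set.Ioc (0:ℝ) ε ⊆ Set.Ioc (0:ℝ) 1 := Set.Ioc_subset_Ioc le_rfl hε1
    have hsub2 : Set.Ioc ε 1 ⊆ Set.Ioc (0:ℝ) 1 := Set.Ioc_subset_Ioc hε0.le le_rfl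
    have hi1 : IntegrableOn (fun s => f s / s) (Set.Ioc 0 ε) volume := hint.mono_set hsub1
    have hi2 : IntegrableOn (fun s => f s / s) (Set.Ioc ε 1) volume := hint.mono_set hsub2
    have hdecomp : (∫ s in Set.Ioc (0:ℝ) 1, f s / s)
        = (∫ s in Set.Ioc (0:ℝ) ε, f s / s) + ∫ s in Set.Ioc ε 1, f s / s := by
      rw [← hsplit, setIntegral_union (Set.Ioc_disjoint_Ioc_of_le le_rfl) measurableSet_Ioc hi1 hi2]
    have hpiece1 : (∫ s in Set.Ioc (0:ℝ) ε, f s / s) ≤ 1 / a := by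
      calc (∫ s in Set.Ioc (0:ℝ) ε, f s / s) ≤ ∫ s in Set.Ioc (0:ℝ) ε, g s :=
          setIntegral_mono_on hi1 (hg_int1.mono_set hsub1) measurableSet_Ioc
            (fun s hs => hbound s (hsub1 hs))
        _ = K * (ε ^ a / a) := hgcalc ε hε0
        _ = 1 / a := by rw [hεa]; field_simp
    have hpiece2 : (∫ s in Set.Ioc ε 1, f s / s) ≤ 1 / a * Real.log K := by
      have hinv : IntegrableOn (fun s : ℝ => s⁻¹) (Set.Ioc ε 1) volume := by
        have hc : ContinuousOn (fun s : ℝ => s⁻¹) (Set.Icc ε 1) := by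
          apply ContinuousOn.inv₀ continuousOn_id
          intro s hs
          exact ne_of_gt (lt_of_lt_of_le hε0 hs.1)
        exact (hc.integrableOn_compact isCompact_Icc).mono_set Set.Ioc_subset_Icc_self
      calc (∫ s in Set.Ioc ε 1, f s / s) ≤ ∫ s in Set.Ioc ε 1, s⁻¹ := by
            apply setIntegral_mono_on hi2 hinv measurableSet_Ioc
            intro s hs
            have hs0 : 0 < s := lt_of_lt_of_le hε0 hs.1.le
            calc f s / s ≤ 1 / s := (div_le_div_iff_of_pos_right hs0).mpr (hf1 s (hsub2 hs))
              _ = s⁻¹ := one_div s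
        _ = Real.log (1 / ε) := by
            rw [← intervalIntegral.integral_of_le hε1]
            exact integral_inv_of_pos hε0 one_pos
        _ = 1 / a * Real.log K := by
            rw [one_div, Real.log_inv, hεdef, Real.log_rpow hK0']
            ring
    calc (∫ s in Set.Ioc (0:ℝ) 1, f s / s)
        = (∫ s in Set.Ioc (0:ℝ) ε, f s / s) + ∫ s in Set.Ioc ε 1, f s / s := hdecomp
      _ ≤ 1 / a + 1 / a * Real.log K := add_le_add hpiece1 hpiece2

private lemma half_le_log_one_add {t : ℝ} (h0 : 0 ≤ t) (h1 : t ≤ 1) :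
    t / 2 ≤ Real.log (1 + t) := by
  have h1t : (0:ℝ) < 1 + t := by linarith
  have h := Real.log_le_sub_one_of_pos (x := (1 + t)⁻¹) (inv_pos.mpr h1t)
  rw [Real.log_inv] at h
  have h2 : 1 - (1 + t)⁻¹ ≤ Real.log (1 + t) := by linarith
  have h3 : 1 - (1 + t)⁻¹ = t / (1 + t) := by field_simp; ring
  have h4 : t / 2 ≤ t / (1 + t) := by
    apply div_le_div_of_nonneg_left h0 h1t; linarith
  linarith [h3 ▸ h2]


end Integral

/-- Lemma 1(i): for `Q ∈ M₊` there is `B₁ > 0` such that for every `x`,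
`P₁(x) = ∫₀¹ min(‖s^Q x‖, 1) ds/s` is finite and `P₁(x) ≤ B₁ log(1 + ‖x‖)`. -/
theorem lemma1_part_i {d : ℕ} (Q : Matrix (Fin d) (Fin d) ℝ) (hQ : MPlus Q) :
    ∃ B₁ : ℝ, 0 < B₁ ∧ ∀ x : EuclideanSpace ℝ (Fin d),
      IntegrableOn (fun s : ℝ => min ‖mAct Q s x‖ 1 / s) (Set.Ioc 0 1) volume ∧
      (∫ s in Set.Ioc (0:ℝ) 1, min ‖mAct Q s x‖ 1 / s) ≤ B₁ * Real.log (1 + ‖x‖) := by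
  rcases Nat.eq_zero_or_pos d with hd | hd
  · subst hd
    refine ⟨1, one_pos, fun x => ?_⟩
    have hx : (x : EuclideanSpace ℝ (Fin 0)) = 0 := Subsingleton.elim _ _
    have hf : (fun s : ℝ => min ‖mAct Q s x‖ 1 / s) = fun _ => 0 := by
      funext s
      rw [Subsingleton.elim (mAct Q s x) 0, norm_zero, min_eq_left zero_le_one, zero_div]
    rw [hf, hx]
    simp [MeasureTheory.integrableOn_const]
  · obtain ⟨a, C₂, ha, hC₂, hbd⟩ := mAct_le hd Q hQ
    set B₁ : ℝ := max (2 * C₂ / a) (1 / a * (1 + Real.log C₂) / Real.log 2 + 1 / a) with hB₁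
    have hB₁pos : 0 < B₁ := lt_max_of_lt_left (by positivity)
    refine ⟨B₁, hB₁pos, fun x => ?_⟩
    set K : ℝ := C₂ * ‖x‖ with hK
    have hK0 : 0 ≤ K := by positivity
    set f : ℝ → ℝ := fun s => min ‖mAct Q s x‖ 1 with hfdef
    have hfc : ContinuousOn f (Set.Ioc 0 1) :=
      (mAct_continuousOn Q x).norm.inf continuousOn_const
    have hf0 : ∀ s ∈ Set.Ioc (0:ℝ) 1, 0 ≤ f s := fun s _ =>
      le_min (norm_nonneg _) zero_le_one
    have hfK : ∀ s ∈ Set.Ioc (0:ℝ) 1, f s ≤ K * s ^ a := by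
      intro s hs
      calc f s ≤ ‖mAct Q s x‖ := min_le_left _ _
        _ ≤ C₂ * s ^ a * ‖x‖ := hbd x s hs
        _ = K * s ^ a := by ring
    have hf1 : ∀ s ∈ Set.Ioc (0:ℝ) 1, f s ≤ 1 := fun s _ => min_le_right _ _
    obtain ⟨hint, hb1, hb2⟩ := integral_min_bound ha hK0 f hfc hf0 hfK hf1
    refine ⟨hint, ?_⟩
    have hlog0 : 0 ≤ Real.log (1 + ‖x‖) :=
      Real.log_nonneg (by linarith [norm_nonneg x])
    rcases le_or_gt ‖x‖ 1 with hx1 | hx1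
    · -- small x : use linear bound
      calc (∫ s in Set.Ioc (0:ℝ) 1, f s / s) ≤ K / a := hb1
        _ = (2 * C₂ / a) * (‖x‖ / 2) := by rw [hK]; ring
        _ ≤ (2 * C₂ / a) * Real.log (1 + ‖x‖) := by
            apply mul_le_mul_of_nonneg_left (half_le_log_one_add (norm_nonneg x) hx1)
            positivity
        _ ≤ B₁ * Real.log (1 + ‖x‖) :=
            mul_le_mul_of_nonneg_right (le_max_left _ _) hlog0
    · -- large x
      have hKgt : 1 < K := by
        have : (1:ℝ) ≤ C₂ := hC₂
        nlinarith [norm_nonneg x]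
      have hlog2 : (0:ℝ) < Real.log 2 := Real.log_pos one_lt_two
      have hL2 : Real.log 2 ≤ Real.log (1 + ‖x‖) :=
        Real.log_le_log two_pos (by linarith)
      have hlogK : Real.log K ≤ Real.log C₂ + Real.log (1 + ‖x‖) := by
        rw [hK, Real.log_mul (by positivity) (by positivity)]
        have := Real.log_le_log (by positivity : (0:ℝ) < ‖x‖) (by linarith : ‖x‖ ≤ 1 + ‖x‖)
        linarith
      have hlogC₂ : 0 ≤ Real.log C₂ := Real.log_nonneg hC₂
      have hL : 0 < Real.log (1 + ‖x‖) := lt_of_lt_of_le hlog2 hL2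
      calc (∫ s in Set.Ioc (0:ℝ) 1, f s / s) ≤ 1 / a + 1 / a * Real.log K := hb2 hKgt
        _ ≤ 1 / a + 1 / a * (Real.log C₂ + Real.log (1 + ‖x‖)) := by
            have h1a : (0:ℝ) ≤ 1 / a := by positivity
            nlinarith
        _ = (1 / a * (1 + Real.log C₂)) + 1 / a * Real.log (1 + ‖x‖) := by ring
        _ ≤ B₁ * Real.log (1 + ‖x‖) := by
            set L := Real.log (1 + ‖x‖) with hLdef
            set q := 1 / a * (1 + Real.log C₂) / Real.log 2 with hqdef
            have hq : 0 ≤ q := by positivity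
            have hEq : q * Real.log 2 = 1 / a * (1 + Real.log C₂) :=
              div_mul_cancel₀ _ hlog2.ne'
            have h1 : 1 / a * (1 + Real.log C₂) ≤ q * L := by
              rw [← hEq]; exact mul_le_mul_of_nonneg_left hL2 hq
            have hBge : q + 1 / a ≤ B₁ := le_max_right _ _
            calc 1 / a * (1 + Real.log C₂) + 1 / a * L ≤ q * L + 1 / a * L := by linarith
              _ = (q + 1 / a) * L := by ring
              _ ≤ B₁ * L := mul_le_mul_of_nonneg_right hBge hL.le

end
end

section
/- Let Q ∈ M₊, ν ∈ H, and let μ be a probability measure on ℝ^d satisfying the fixed-point equation defining D(Q,ν). Let t > 0 and let A be a real d×d matrix commuting with Q (AQ = QA). Then the pushforward measure t^A ν (the image of ν under x ↦ t^A x = exp((log t)·A) x) belongs to H, and the pushforward measure t^A μ satisfies the fixed-point equation defining D(Q, t^A ν); that is, the class D(Q, H) is closed under the transformations x ↦ t^A x. -/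
open MeasureTheory ProbabilityTheory Matrix Filter Topology

noncomputable section

def mActL {d : ℕ} (A : Matrix (Fin d) (Fin d) ℝ) (t : ℝ) :
    EuclideanSpace ℝ (Fin d) →ₗ[ℝ] EuclideanSpace ℝ (Fin d) where
  toFun := mAct A t
  map_add' x y := by simp [mAct, Matrix.mulVec_add]
  map_smul' c x := by simp [mAct, Matrix.mulVec_smul]

lemma mAct_continuous {d : ℕ} (A : Matrix (Fin d) (Fin d) ℝ) (t : ℝ) :
    Continuous (mAct A t) := (mActL A t).continuous_of_finiteDimensional

lemma mAct_measurable {d : ℕ} (A : Matrix (Fin d) (Fin d) ℝ) (t : ℝ) :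
    Measurable (mAct A t) := (mAct_continuous A t).measurable

lemma mAct_bound {d : ℕ} (A : Matrix (Fin d) (Fin d) ℝ) (t : ℝ) :
    ∃ C : ℝ, 1 ≤ C ∧ ∀ x, ‖mAct A t x‖ ≤ C * ‖x‖ := by
  set L := LinearMap.toContinuousLinearMap (mActL A t)
  refine ⟨max ‖L‖ 1, le_max_right _ _, fun x => ?_⟩
  calc ‖mAct A t x‖ = ‖L x‖ := rfl
    _ ≤ ‖L‖ * ‖x‖ := L.le_opNorm x
    _ ≤ max ‖L‖ 1 * ‖x‖ := by
        exact mul_le_mul_of_nonneg_right (le_max_left _ _) (norm_nonneg x)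

lemma mpow_entry_measurable {d : ℕ} (Q : Matrix (Fin d) (Fin d) ℝ) (i j : Fin d) :
    Measurable (fun s : ℝ => mpow Q s i j) := by
  have hexp : Continuous (NormedSpace.exp : Matrix (Fin d) (Fin d) ℝ → _) := by
    letI : SeminormedRing (Matrix (Fin d) (Fin d) ℝ) := Matrix.linftyOpSemiNormedRing
    letI : NormedRing (Matrix (Fin d) (Fin d) ℝ) := Matrix.linftyOpNormedRing
    letI : NormedAlgebra ℝ (Matrix (Fin d) (Fin d) ℝ) := Matrix.linftyOpNormedAlgebra
    exact continuous_iff_continuousAt.mpr fun x =>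
      (NormedSpace.exp_analytic (𝕂 := ℝ) x).continuousAt
  have hentry : Continuous (fun M : Matrix (Fin d) (Fin d) ℝ => M i j) :=
    (continuous_apply j).comp (continuous_apply i)
  have hc : Continuous (fun r : ℝ => NormedSpace.exp (r • Q) i j) :=
    hentry.comp (hexp.comp (continuous_id.smul continuous_const))
  exact hc.measurable.comp Real.measurable_log

lemma mAct_fun_measurable {d : ℕ} (Q : Matrix (Fin d) (Fin d) ℝ) :
    Measurable (fun p : ℝ × (EuclideanSpace ℝ (Fin d) × EuclideanSpace ℝ (Fin d)) =>
      mAct Q p.1 (p.2.1 + p.2.2)) := by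
  apply (WithLp.measurable_toLp 2 _).comp
  apply measurable_pi_lambda
  intro i
  show Measurable fun p : ℝ × (EuclideanSpace ℝ (Fin d) × EuclideanSpace ℝ (Fin d)) =>
    ∑ j, mpow Q p.1 i j * (p.2.1 j + p.2.2 j)
  apply Finset.measurable_sum
  intro j _
  exact ((mpow_entry_measurable Q i j).comp measurable_fst).mul
    (((measurable_pi_apply j).comp ((WithLp.measurable_ofLp 2 _).comp
        (measurable_fst.comp measurable_snd))).add
      ((measurable_pi_apply j).comp ((WithLp.measurable_ofLp 2 _).comp
        (measurable_snd.comp measurable_snd))))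

lemma mpow_comm {d : ℕ} (Q A : Matrix (Fin d) (Fin d) ℝ) (hAQ : A * Q = Q * A) (s t : ℝ) :
    mpow Q s * mpow A t = mpow A t * mpow Q s := by
  have h : Commute (Real.log s • Q) (Real.log t • A) :=
    Commute.smul_right (Commute.smul_left hAQ.symm _) _
  exact (h.exp)

/-- Closure of `D(Q, H)` under the transformations `x ↦ t^A x` for `A` commuting with `Q`:
if `μ` is the operator Dickman distribution `D(Q,ν)`, `t > 0` and `AQ = QA`, then the
pushforward `t^A ν` is in `H` and the pushforward `t^A μ` is `D(Q, t^A ν)`. -/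
theorem opDickman_map_mpow_commuting {d : ℕ} (Q : Matrix (Fin d) (Fin d) ℝ) (hQ : MPlus Q)
    (ν μ : Measure (EuclideanSpace ℝ (Fin d))) (hν : ClassH ν) [IsProbabilityMeasure μ]
    (hμ : IsOpDickman Q ν μ) (t : ℝ) (ht : 0 < t)
    (A : Matrix (Fin d) (Fin d) ℝ) (hAQ : A * Q = Q * A) :
    ClassH (Measure.map (mAct A t) ν) ∧
      IsOpDickman Q (Measure.map (mAct A t) ν) (Measure.map (mAct A t) μ) := by
  haveI := hν.1
  have hT := mAct_measurable A t
  haveI hPν : IsProbabilityMeasure (Measure.map (mAct A t) ν) :=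
    Measure.isProbabilityMeasure_map hT.aemeasurable
  haveI hPμ : IsProbabilityMeasure (Measure.map (mAct A t) μ) :=
    Measure.isProbabilityMeasure_map hT.aemeasurable
  haveI : IsProbabilityMeasure unif01 := ⟨by simp [unif01]⟩
  constructor
  · refine ⟨hPν, ?_⟩
    have hS : MeasurableSet {x : EuclideanSpace ℝ (Fin d) | 1 < ‖x‖} :=
      (isOpen_lt continuous_const continuous_norm).measurableSet
    have hf : Measurable fun x : EuclideanSpace ℝ (Fin d) => ENNReal.ofReal (Real.log ‖x‖) :=
      (Real.measurable_log.comp measurable_norm).ennreal_ofReal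
    rw [setLIntegral_map hS hf hT]
    obtain ⟨C, hC1, hCx⟩ := mAct_bound A t
    have hC0 : (0:ℝ) < C := lt_of_lt_of_le one_pos hC1
    set g : EuclideanSpace ℝ (Fin d) → ENNReal := fun x =>
      ENNReal.ofReal (Real.log C) +
        Set.indicator {x : EuclideanSpace ℝ (Fin d) | 1 < ‖x‖}
          (fun x => ENNReal.ofReal (Real.log ‖x‖)) x with hg_def
    have hg : Measurable g := measurable_const.add (hf.indicator hS)
    have hptw : ∀ x ∈ mAct A t ⁻¹' {x : EuclideanSpace ℝ (Fin d) | 1 < ‖x‖},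
        ENNReal.ofReal (Real.log ‖mAct A t x‖) ≤ g x := by
      intro x hx
      have h1 : (1:ℝ) < ‖mAct A t x‖ := hx
      have hx0 : 0 < ‖x‖ := by
        rcases eq_or_lt_of_le (norm_nonneg x) with h | h
        · exfalso
          have hx0' : x = 0 := norm_eq_zero.mp h.symm
          rw [hx0'] at h1
          have : mAct A t (0 : EuclideanSpace ℝ (Fin d)) = 0 := by simp [mAct]
          rw [this, norm_zero] at h1
          linarith
        · exact h
      have hlog : Real.log ‖mAct A t x‖ ≤ Real.log C + Real.log ‖x‖ := by
        have h2 : Real.log ‖mAct A t x‖ ≤ Real.log (C * ‖x‖) :=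
          Real.log_le_log (lt_trans one_pos h1) (hCx x)
        rwa [Real.log_mul (ne_of_gt hC0) (ne_of_gt hx0)] at h2
      calc ENNReal.ofReal (Real.log ‖mAct A t x‖)
          ≤ ENNReal.ofReal (Real.log C + Real.log ‖x‖) := ENNReal.ofReal_le_ofReal hlog
        _ ≤ ENNReal.ofReal (Real.log C) + ENNReal.ofReal (Real.log ‖x‖) :=
            ENNReal.ofReal_add_le
        _ ≤ g x := by
            refine add_le_add le_rfl ?_
            by_cases hx1 : x ∈ {x : EuclideanSpace ℝ (Fin d) | 1 < ‖x‖}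
            · rw [Set.indicator_of_mem hx1]
            · rw [Set.indicator_of_notMem hx1]
              have : ‖x‖ ≤ 1 := le_of_not_gt hx1
              simp [ENNReal.ofReal_eq_zero.mpr (Real.log_nonpos (norm_nonneg x) this)]
    calc ∫⁻ x in mAct A t ⁻¹' {x : EuclideanSpace ℝ (Fin d) | 1 < ‖x‖},
            ENNReal.ofReal (Real.log ‖mAct A t x‖) ∂ν
        ≤ ∫⁻ x in mAct A t ⁻¹' {x : EuclideanSpace ℝ (Fin d) | 1 < ‖x‖}, g x ∂ν :=
          setLIntegral_mono hg hptw
      _ ≤ ∫⁻ x, g x ∂ν := setLIntegral_le_lintegral _ _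
      _ = ENNReal.ofReal (Real.log C) * ν Set.univ +
            ∫⁻ x in {x : EuclideanSpace ℝ (Fin d) | 1 < ‖x‖},
              ENNReal.ofReal (Real.log ‖x‖) ∂ν := by
          rw [hg_def, lintegral_add_left measurable_const, lintegral_const,
            lintegral_indicator hS]
      _ < ⊤ := by
          apply ENNReal.add_lt_top.mpr
          constructor
          · exact ENNReal.mul_lt_top ENNReal.ofReal_lt_top (measure_lt_top ν _)
          · exact hν.2
  · have hF := mAct_fun_measurable (d := d) Q
    have hG : Measurable (Prod.map (mAct A t) (mAct A t)) := hT.prodMap hT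
    unfold IsOpDickman at hμ ⊢
    rw [Measure.map_prod_map _ _ hT hT]
    have h2 : unif01.prod (Measure.map (Prod.map (mAct A t) (mAct A t)) (μ.prod ν)) =
        Measure.map (Prod.map id (Prod.map (mAct A t) (mAct A t))) (unif01.prod (μ.prod ν)) := by
      conv_lhs => rw [show unif01 = Measure.map id unif01 from (Measure.map_id).symm]
      exact Measure.map_prod_map _ _ measurable_id hG
    rw [h2, Measure.map_map hF (measurable_id.prodMap hG)]
    have hcomp : (fun p : ℝ × (EuclideanSpace ℝ (Fin d) × EuclideanSpace ℝ (Fin d)) =>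
        mAct Q p.1 (p.2.1 + p.2.2)) ∘ Prod.map id (Prod.map (mAct A t) (mAct A t)) =
        (mAct A t) ∘ (fun p : ℝ × (EuclideanSpace ℝ (Fin d) × EuclideanSpace ℝ (Fin d)) =>
          mAct Q p.1 (p.2.1 + p.2.2)) := by
      funext p
      show mAct Q p.1 (mAct A t p.2.1 + mAct A t p.2.2) = mAct A t (mAct Q p.1 (p.2.1 + p.2.2))
      rw [show mAct A t p.2.1 + mAct A t p.2.2 = mAct A t (p.2.1 + p.2.2) from
        (by simp [mAct, Matrix.mulVec_add])]
      show WithLp.toLp 2 ((mpow Q p.1).mulVec ((mpow A t).mulVec (p.2.1 + p.2.2).ofLp)) =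
        WithLp.toLp 2 ((mpow A t).mulVec ((mpow Q p.1).mulVec (p.2.1 + p.2.2).ofLp))
      rw [Matrix.mulVec_mulVec, Matrix.mulVec_mulVec, mpow_comm Q A hAQ]
    rw [hcomp, ← Measure.map_map hT hF, hμ]

end
end

section
/- Let θ > 0, let ν ∈ H, and let μ be a probability measure on ℝ^d satisfying the fixed-point equation defining D((1/θ)·I, ν), where I is the d×d identity matrix. Let T : ℝ^d → ℝ^d be a linear map such that the pushforward of ν under T equals ν. Then the pushforward of μ under T equals μ. In particular, if ν is rotationally invariant then μ is rotationally invariant. -/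
open MeasureTheory ProbabilityTheory Matrix Filter Topology

noncomputable section

namespace ODAux

instance : IsProbabilityMeasure unif01 :=
  ⟨by simp [unif01, Measure.restrict_apply_univ, Real.volume_Icc]⟩

variable {d : ℕ}

/-- bounded-by-one and Lipschitz with constant `L` (real-valued form). -/
def BL (L : ℝ) (f : EuclideanSpace ℝ (Fin d) → ℝ) : Prop :=
  (∀ x, |f x| ≤ 1) ∧ ∀ x y, |f x - f y| ≤ L * ‖x - y‖

lemma BL.continuous {L : ℝ} {f : EuclideanSpace ℝ (Fin d) → ℝ} (hL : 0 ≤ L)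
    (hf : BL L f) : Continuous f := by
  refine (LipschitzWith.of_dist_le_mul (K := L.toNNReal) (f := f) ?_).continuous
  intro x y
  rw [Real.dist_eq, Real.coe_toNNReal _ hL, dist_eq_norm]
  exact hf.2 x y

lemma integrable_of_bdd {α : Type*} [MeasurableSpace α] {κ : Measure α} [IsFiniteMeasure κ]
    {f : α → ℝ} (hm : AEStronglyMeasurable f κ) {C : ℝ} (hb : ∀ x, |f x| ≤ C) :
    Integrable f κ :=
  (integrable_const C).mono' hm (Eventually.of_forall (by simpa [Real.norm_eq_abs] using hb))

lemma continuous_dmap {θ : ℝ} (hθ : 0 < θ) :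
    Continuous (fun p : ℝ × (EuclideanSpace ℝ (Fin d) × EuclideanSpace ℝ (Fin d)) =>
      p.1 ^ (1/θ) • (p.2.1 + p.2.2)) :=
  ((Real.continuous_rpow_const (by positivity)).comp continuous_fst).smul
    ((continuous_fst.comp continuous_snd).add (continuous_snd.comp continuous_snd))

/-- Fubini representation of `∫ f dκ` for a Dickman fixed point `κ`. -/
lemma rep {θ : ℝ} (hθ : 0 < θ) (ν κ : Measure (EuclideanSpace ℝ (Fin d)))
    [IsProbabilityMeasure ν] [IsProbabilityMeasure κ] (hκ : IsScalarDickman θ ν κ)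
    {f : EuclideanSpace ℝ (Fin d) → ℝ} (hc : Continuous f) (hb : ∀ x, |f x| ≤ 1) :
    (∫ x, f x ∂κ = ∫ s, (∫ x, ∫ w, f (s ^ (1/θ) • (x + w)) ∂ν ∂κ) ∂unif01) ∧
      Integrable (fun s => ∫ x, ∫ w, f (s ^ (1/θ) • (x + w)) ∂ν ∂κ) unif01 := by
  set F := (fun p : ℝ × (EuclideanSpace ℝ (Fin d) × EuclideanSpace ℝ (Fin d)) =>
      p.1 ^ (1/θ) • (p.2.1 + p.2.2)) with hF
  have hFc : Continuous F := continuous_dmap hθ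
  set g : ℝ × (EuclideanSpace ℝ (Fin d) × EuclideanSpace ℝ (Fin d)) → ℝ :=
    fun p => f (F p) with hg
  have hgc : Continuous g := hc.comp hFc
  have hgi : Integrable g (unif01.prod (κ.prod ν)) :=
    integrable_of_bdd hgc.aestronglyMeasurable (fun p => hb _)
  have h1 : ∫ x, f x ∂κ = ∫ p, g p ∂(unif01.prod (κ.prod ν)) := by
    conv_lhs => rw [← hκ]
    rw [integral_map hFc.measurable.aemeasurable hc.aestronglyMeasurable]
  have h3 : ∀ s : ℝ, ∫ y, g (s, y) ∂(κ.prod ν)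
      = ∫ x, ∫ w, f (s ^ (1/θ) • (x + w)) ∂ν ∂κ := by
    intro s
    exact integral_prod _ (integrable_of_bdd
      ((hc.comp ((Real.continuous_rpow_const (by positivity)).comp continuous_const |>.smul
        (continuous_fst.add continuous_snd))).aestronglyMeasurable) (fun y => hb _))
  constructor
  · rw [h1, integral_prod _ hgi]
    exact integral_congr_ae (Eventually.of_forall h3)
  · exact hgi.integral_prod_left.congr (Eventually.of_forall h3)

abbrev tailr (κ : Measure (EuclideanSpace ℝ (Fin d))) (R : ℝ) : ℝ :=
  (κ {x | R < ‖x‖}).toReal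

def Gf (κ₁ κ₂ : Measure (EuclideanSpace ℝ (Fin d))) (L : ℝ) : ℝ :=
  min 2 (2 * Real.sqrt L + 2 * (tailr κ₁ (Real.sqrt L)⁻¹ + tailr κ₂ (Real.sqrt L)⁻¹))

lemma Gf_nonneg (κ₁ κ₂ : Measure (EuclideanSpace ℝ (Fin d))) (L : ℝ) : 0 ≤ Gf κ₁ κ₂ L := by
  have h1 : (0:ℝ) ≤ Real.sqrt L := Real.sqrt_nonneg L
  have h2 : (0:ℝ) ≤ tailr κ₁ (Real.sqrt L)⁻¹ := ENNReal.toReal_nonneg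
  have h3 : (0:ℝ) ≤ tailr κ₂ (Real.sqrt L)⁻¹ := ENNReal.toReal_nonneg
  refine le_min (by norm_num) (by positivity)

lemma tailr_mono (κ : Measure (EuclideanSpace ℝ (Fin d))) [IsFiniteMeasure κ] {R₁ R₂ : ℝ}
    (h : R₂ ≤ R₁) : tailr κ R₁ ≤ tailr κ R₂ := by
  refine ENNReal.toReal_le_toReal (measure_ne_top _ _) (measure_ne_top _ _) |>.mpr ?_
  exact measure_mono (fun x hx => lt_of_le_of_lt h hx)

lemma Gf_mono (κ₁ κ₂ : Measure (EuclideanSpace ℝ (Fin d))) [IsFiniteMeasure κ₁]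
    [IsFiniteMeasure κ₂] {L₁ L₂ : ℝ} (h0 : 0 < L₁) (h : L₁ ≤ L₂) :
    Gf κ₁ κ₂ L₁ ≤ Gf κ₁ κ₂ L₂ := by
  have hs : Real.sqrt L₁ ≤ Real.sqrt L₂ := Real.sqrt_le_sqrt h
  have hs1 : 0 < Real.sqrt L₁ := Real.sqrt_pos.mpr h0
  have hinv : (Real.sqrt L₂)⁻¹ ≤ (Real.sqrt L₁)⁻¹ := inv_anti₀ hs1 hs
  refine min_le_min le_rfl ?_
  have t1 := tailr_mono κ₁ hinv
  have t2 := tailr_mono κ₂ hinv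
  nlinarith

/-- tails of a probability measure vanish. -/
lemma exists_tail_small (κ : Measure (EuclideanSpace ℝ (Fin d))) [IsProbabilityMeasure κ]
    {ε : ℝ} (hε : 0 < ε) : ∀ᶠ n : ℕ in atTop, tailr κ (n : ℝ) < ε := by
  have hmeas : ∀ n : ℕ, MeasurableSet {x : EuclideanSpace ℝ (Fin d) | (n:ℝ) < ‖x‖} :=
    fun n => measurableSet_lt measurable_const measurable_norm
  have hanti : Antitone (fun n : ℕ => {x : EuclideanSpace ℝ (Fin d) | (n:ℝ) < ‖x‖}) := by
    intro m n hmn x hx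
    exact lt_of_le_of_lt (show (m:ℝ) ≤ (n:ℝ) by exact_mod_cast hmn) hx
  have hiInter : (⋂ n : ℕ, {x : EuclideanSpace ℝ (Fin d) | (n:ℝ) < ‖x‖}) = ∅ := by
    ext x
    simp only [Set.mem_iInter, Set.mem_setOf_eq, Set.mem_empty_iff_false, iff_false, not_forall,
      not_lt]
    obtain ⟨n, hn⟩ := exists_nat_gt ‖x‖
    exact ⟨n, hn.le⟩
  have htends := MeasureTheory.tendsto_measure_iInter_atTop
    (μ := κ) (fun n => (hmeas n).nullMeasurableSet) hanti ⟨0, measure_ne_top _ _⟩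
  rw [hiInter, measure_empty] at htends
  have htr : Tendsto (fun n : ℕ => tailr κ (n : ℝ)) atTop (𝓝 0) := by
    have := (ENNReal.tendsto_toReal (by simp : (0:ENNReal) ≠ ⊤)).comp htends
    exact this
  exact htr.eventually_lt_const hε

lemma Gf_small (κ₁ κ₂ : Measure (EuclideanSpace ℝ (Fin d))) [IsProbabilityMeasure κ₁]
    [IsProbabilityMeasure κ₂] {ε : ℝ} (hε : 0 < ε) : ∃ δ > 0, Gf κ₁ κ₂ δ ≤ ε := by
  have h1 := exists_tail_small κ₁ (show (0:ℝ) < ε/8 by linarith)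
  have h2 := exists_tail_small κ₂ (show (0:ℝ) < ε/8 by linarith)
  obtain ⟨N, ⟨hN1, hN2⟩, hN0⟩ := ((h1.and h2).and (eventually_ge_atTop 1)).exists
  have hNpos : (0:ℝ) < N := by exact_mod_cast hN0
  set r : ℝ := min (ε/4) (N:ℝ)⁻¹ with hr
  have hrpos : 0 < r := lt_min (by linarith) (by positivity)
  refine ⟨r^2, by positivity, ?_⟩
  have hsq : Real.sqrt (r^2) = r := Real.sqrt_sq hrpos.le
  have hNr : (N:ℝ) ≤ (Real.sqrt (r^2))⁻¹ := by
    rw [hsq]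
    have := inv_anti₀ hrpos (min_le_right (ε/4) (N:ℝ)⁻¹)
    rwa [inv_inv] at this
  have t1 : tailr κ₁ (Real.sqrt (r^2))⁻¹ ≤ tailr κ₁ (N:ℝ) := tailr_mono κ₁ hNr
  have t2 : tailr κ₂ (Real.sqrt (r^2))⁻¹ ≤ tailr κ₂ (N:ℝ) := tailr_mono κ₂ hNr
  have hrle : r ≤ ε/4 := min_le_left _ _
  calc Gf κ₁ κ₂ (r^2) ≤ 2 * Real.sqrt (r^2)
      + 2 * (tailr κ₁ (Real.sqrt (r^2))⁻¹ + tailr κ₂ (Real.sqrt (r^2))⁻¹) := min_le_right _ _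
    _ ≤ 2 * (ε/4) + 2 * (ε/8 + ε/8) := by
        rw [hsq]; rw [hsq] at t1 t2; nlinarith [hN1, hN2, t1, t2]
    _ ≤ ε := by linarith

lemma abs_integral_le_one (κ : Measure (EuclideanSpace ℝ (Fin d))) [IsProbabilityMeasure κ]
    {f : EuclideanSpace ℝ (Fin d) → ℝ} (hb : ∀ x, |f x| ≤ 1) :
    |∫ x, f x ∂κ| ≤ 1 := by
  rw [← Real.norm_eq_abs]
  calc ‖∫ x, f x ∂κ‖ ≤ ∫ _x, (1:ℝ) ∂κ := by
        refine norm_integral_le_of_norm_le (integrable_const 1) ?_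
        exact Eventually.of_forall (fun x => by simpa [Real.norm_eq_abs] using hb x)
    _ = 1 := by simp

lemma center_est (κ : Measure (EuclideanSpace ℝ (Fin d))) [IsProbabilityMeasure κ]
    {L : ℝ} {f : EuclideanSpace ℝ (Fin d) → ℝ} (hL : 0 < L) (hf : BL L f) :
    |∫ x, f x ∂κ - f 0| ≤ Real.sqrt L + 2 * tailr κ (Real.sqrt L)⁻¹ := by
  set R : ℝ := (Real.sqrt L)⁻¹ with hR
  have hRpos : 0 < R := by positivity
  have hSmeas : MeasurableSet {x : EuclideanSpace ℝ (Fin d) | R < ‖x‖} :=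
    measurableSet_lt measurable_const measurable_norm
  have hfi : Integrable f κ := integrable_of_bdd (hf.continuous hL.le).aestronglyMeasurable hf.1
  have h0 : ∫ x, f x ∂κ - f 0 = ∫ x, (f x - f 0) ∂κ := by
    rw [integral_sub hfi (integrable_const _), integral_const]
    simp
  have hbi : Integrable (fun x : EuclideanSpace ℝ (Fin d) =>
      L * R + Set.indicator {x : EuclideanSpace ℝ (Fin d) | R < ‖x‖} (fun _ => (2:ℝ)) x) κ :=
    (integrable_const _).add ((integrable_const (2:ℝ)).indicator hSmeas)
  have key : ‖∫ x, (f x - f 0) ∂κ‖ ≤ ∫ x, (L * R +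
      Set.indicator {x : EuclideanSpace ℝ (Fin d) | R < ‖x‖} (fun _ => (2:ℝ)) x) ∂κ := by
    refine norm_integral_le_of_norm_le hbi (Eventually.of_forall (fun x => ?_))
    rw [Real.norm_eq_abs]
    by_cases hx : R < ‖x‖
    · have : Set.indicator {x : EuclideanSpace ℝ (Fin d) | R < ‖x‖} (fun _ => (2:ℝ)) x = 2 :=
        Set.indicator_of_mem (show x ∈ {x : EuclideanSpace ℝ (Fin d) | R < ‖x‖} from hx) _
      rw [this]
      have h1 := hf.1 x
      have h2 := hf.1 0
      calc |f x - f 0| ≤ |f x| + |f 0| := abs_sub _ _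
        _ ≤ 2 := by linarith
        _ ≤ L * R + 2 := by nlinarith
    · have : Set.indicator {x : EuclideanSpace ℝ (Fin d) | R < ‖x‖} (fun _ => (2:ℝ)) x = 0 :=
        Set.indicator_of_notMem (show x ∉ {x : EuclideanSpace ℝ (Fin d) | R < ‖x‖} from hx) _
      rw [this, add_zero]
      calc |f x - f 0| ≤ L * ‖x - 0‖ := hf.2 x 0
        _ = L * ‖x‖ := by rw [sub_zero]
        _ ≤ L * R := by
            have := not_lt.mp hx
            nlinarith
  have hint : ∫ x, (L * R +
      Set.indicator {x : EuclideanSpace ℝ (Fin d) | R < ‖x‖} (fun _ => (2:ℝ)) x) ∂κ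
      = L * R + 2 * tailr κ R := by
    rw [integral_add (integrable_const _) ((integrable_const (2:ℝ)).indicator hSmeas),
      integral_const, integral_indicator_const _ hSmeas]
    simp [mul_comm]
    rfl
  have hLR : L * R = Real.sqrt L := by
    rw [hR, ← div_eq_mul_inv, Real.div_sqrt]
  rw [h0, ← Real.norm_eq_abs]
  rw [hint, hLR] at key
  exact key

lemma const_case (κ₁ κ₂ : Measure (EuclideanSpace ℝ (Fin d))) [IsProbabilityMeasure κ₁]
    [IsProbabilityMeasure κ₂] {f : EuclideanSpace ℝ (Fin d) → ℝ} (hf : BL 0 f) :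
    ∫ x, f x ∂κ₁ = ∫ x, f x ∂κ₂ := by
  have hconst : ∀ x, f x = f 0 := by
    intro x
    have := hf.2 x 0
    rw [zero_mul] at this
    have h0 : f x - f 0 = 0 := abs_nonpos_iff.mp this
    linarith
  have e1 : ∫ x, f x ∂κ₁ = f 0 := by
    rw [show f = fun _ => f 0 from funext hconst, integral_const]; simp
  have e2 : ∫ x, f x ∂κ₂ = f 0 := by
    rw [show f = fun _ => f 0 from funext hconst, integral_const]; simp
  rw [e1, e2]

lemma int_affine (a c : ℝ) : ∫ s, (a + c * s) ∂unif01 = a + c / 2 := by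
  have hid : Integrable (fun s : ℝ => c * s) unif01 :=
    (continuous_const.mul continuous_id).integrableOn_Icc
  have hint : ∫ s, s ∂unif01 = 1/2 := by
    show ∫ s in Set.Icc (0:ℝ) 1, s = 1/2
    rw [MeasureTheory.integral_Icc_eq_integral_Ioc,
      ← intervalIntegral.integral_of_le (zero_le_one (α := ℝ)), integral_id]
    norm_num
  rw [integral_add (integrable_const a) hid, integral_const, MeasureTheory.integral_const_mul, hint]
  simp [measure_univ]
  ring

/-- The main inductive estimate. -/
lemma main_ind {θ : ℝ} (hθ : 0 < θ) (ν κ₁ κ₂ : Measure (EuclideanSpace ℝ (Fin d)))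
    [IsProbabilityMeasure ν] [IsProbabilityMeasure κ₁] [IsProbabilityMeasure κ₂]
    (h1 : IsScalarDickman θ ν κ₁) (h2 : IsScalarDickman θ ν κ₂) :
    ∀ n : ℕ, ∀ L : ℝ, 0 ≤ L → ∀ f : EuclideanSpace ℝ (Fin d) → ℝ, BL L f →
      ∀ δ : ℝ, 0 < δ →
      |∫ x, f x ∂κ₁ - ∫ x, f x ∂κ₂| ≤ Gf κ₁ κ₂ δ + 2 * (L/δ)^θ * (1/2:ℝ)^n := by
  intro n
  induction n with
  | zero =>
    intro L hL f hf δ hδ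
    rcases eq_or_lt_of_le hL with hL0 | hL0
    · rw [const_case κ₁ κ₂ (hL0 ▸ hf)]
      simp only [sub_self, abs_zero]
      have := Gf_nonneg κ₁ κ₂ δ
      positivity
    · by_cases hLδ : L ≤ δ
      · have hGL : |∫ x, f x ∂κ₁ - ∫ x, f x ∂κ₂| ≤ Gf κ₁ κ₂ L := by
          refine le_min ?_ ?_
          · calc |∫ x, f x ∂κ₁ - ∫ x, f x ∂κ₂| ≤ |∫ x, f x ∂κ₁| + |∫ x, f x ∂κ₂| := abs_sub _ _
              _ ≤ 2 := by
                  linarith [abs_integral_le_one κ₁ hf.1, abs_integral_le_one κ₂ hf.1]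
          · have c1 := center_est κ₁ hL0 hf
            have c2 := center_est κ₂ hL0 hf
            calc |∫ x, f x ∂κ₁ - ∫ x, f x ∂κ₂|
                = |(∫ x, f x ∂κ₁ - f 0) - (∫ x, f x ∂κ₂ - f 0)| := by ring_nf
              _ ≤ |∫ x, f x ∂κ₁ - f 0| + |∫ x, f x ∂κ₂ - f 0| := abs_sub _ _
              _ ≤ 2 * Real.sqrt L
                  + 2 * (tailr κ₁ (Real.sqrt L)⁻¹ + tailr κ₂ (Real.sqrt L)⁻¹) := by linarith
        have hmono := Gf_mono κ₁ κ₂ hL0 hLδ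
        have hpos : (0:ℝ) ≤ 2 * (L/δ)^θ * (1/2:ℝ)^0 := by positivity
        linarith
      · push_neg at hLδ
        have h2' : |∫ x, f x ∂κ₁ - ∫ x, f x ∂κ₂| ≤ 2 := by
          calc |∫ x, f x ∂κ₁ - ∫ x, f x ∂κ₂| ≤ |∫ x, f x ∂κ₁| + |∫ x, f x ∂κ₂| := abs_sub _ _
            _ ≤ 2 := by linarith [abs_integral_le_one κ₁ hf.1, abs_integral_le_one κ₂ hf.1]
        have hge : (1:ℝ) ≤ (L/δ)^θ :=
          Real.one_le_rpow ((one_le_div hδ).mpr hLδ.le) hθ.le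
        have := Gf_nonneg κ₁ κ₂ δ
        calc |∫ x, f x ∂κ₁ - ∫ x, f x ∂κ₂| ≤ 2 := h2'
          _ ≤ 2 * (L/δ)^θ * (1/2:ℝ)^0 := by rw [pow_zero, mul_one]; linarith
          _ ≤ Gf κ₁ κ₂ δ + 2 * (L/δ)^θ * (1/2:ℝ)^0 := by linarith
  | succ n IH =>
    intro L hL f hf δ hδ
    set c : ℝ := 2 * (L/δ)^θ * (1/2:ℝ)^n with hc
    have hc0 : 0 ≤ c := by positivity
    have hfc : Continuous f := hf.continuous hL
    obtain ⟨e1, i1⟩ := rep hθ ν κ₁ h1 hfc hf.1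
    obtain ⟨e2, i2⟩ := rep hθ ν κ₂ h2 hfc hf.1
    set h : ℝ → EuclideanSpace ℝ (Fin d) → ℝ :=
      fun s x => ∫ w, f (s ^ (1/θ) • (x + w)) ∂ν with hh
    have hD : ∫ x, f x ∂κ₁ - ∫ x, f x ∂κ₂
        = ∫ s, ((∫ x, h s x ∂κ₁) - (∫ x, h s x ∂κ₂)) ∂unif01 := by
      rw [e1, e2, ← integral_sub i1 i2]
    have hmem : ∀ᵐ s ∂unif01, s ∈ Set.Icc (0:ℝ) 1 :=
      ae_restrict_mem measurableSet_Icc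
    have hbnd : ∀ᵐ s ∂unif01,
        ‖(∫ x, h s x ∂κ₁) - (∫ x, h s x ∂κ₂)‖ ≤ Gf κ₁ κ₂ δ + c * s := by
      filter_upwards [hmem] with s hs
      have hs0 : 0 ≤ s := hs.1
      have hsp : 0 ≤ s ^ (1/θ) := Real.rpow_nonneg hs0 _
      have hgint : ∀ z : EuclideanSpace ℝ (Fin d),
          Integrable (fun w => f (s ^ (1/θ) • (z + w))) ν := fun z =>
        integrable_of_bdd ((by fun_prop : Continuous (fun w => f (s ^ (1/θ) • (z + w)))).aestronglyMeasurable)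
          (fun w => hf.1 _)
      have hBL : BL (L * s ^ (1/θ)) (h s) := by
        constructor
        · intro x
          exact abs_integral_le_one ν (fun w => hf.1 _)
        · intro x y
          rw [hh]
          dsimp only
          rw [← integral_sub (hgint x) (hgint y)]
          calc |∫ w, (f (s ^ (1/θ) • (x + w)) - f (s ^ (1/θ) • (y + w))) ∂ν|
              ≤ ∫ _w, (L * s ^ (1/θ) * ‖x - y‖) ∂ν := by
                rw [← Real.norm_eq_abs]
                refine norm_integral_le_of_norm_le (integrable_const _)
                  (Eventually.of_forall (fun w => ?_))
                rw [Real.norm_eq_abs]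
                calc |f (s ^ (1/θ) • (x + w)) - f (s ^ (1/θ) • (y + w))|
                    ≤ L * ‖s ^ (1/θ) • (x + w) - s ^ (1/θ) • (y + w)‖ := hf.2 _ _
                  _ = L * s ^ (1/θ) * ‖x - y‖ := by
                      rw [← smul_sub, add_sub_add_right_eq_sub, norm_smul, Real.norm_eq_abs,
                        abs_of_nonneg hsp, mul_assoc]
            _ = L * s ^ (1/θ) * ‖x - y‖ := by
                rw [integral_const]; simp [measure_univ]
      have hIH := IH (L * s ^ (1/θ)) (by positivity) (h s) hBL δ hδ
      have hrw : ((L * s ^ (1/θ)) / δ) ^ θ = (L/δ)^θ * s := by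
        rw [show (L * s ^ (1/θ)) / δ = (L/δ) * s ^ (1/θ) by ring,
          Real.mul_rpow (by positivity) hsp, ← Real.rpow_mul hs0 (1/θ) θ,
          one_div_mul_cancel hθ.ne', Real.rpow_one]
      rw [Real.norm_eq_abs]
      calc |(∫ x, h s x ∂κ₁) - (∫ x, h s x ∂κ₂)|
          ≤ Gf κ₁ κ₂ δ + 2 * ((L * s ^ (1/θ)) / δ) ^ θ * (1/2:ℝ)^n := hIH
        _ = Gf κ₁ κ₂ δ + c * s := by rw [hrw, hc]; ring
    have hInt : Integrable (fun s => Gf κ₁ κ₂ δ + c * s) unif01 :=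
      (continuous_const.add (continuous_const.mul continuous_id)).integrableOn_Icc
    have hkey := norm_integral_le_of_norm_le hInt hbnd
    rw [← hD] at hkey
    rw [Real.norm_eq_abs] at hkey
    calc |∫ x, f x ∂κ₁ - ∫ x, f x ∂κ₂|
        ≤ ∫ s, (Gf κ₁ κ₂ δ + c * s) ∂unif01 := hkey
      _ = Gf κ₁ κ₂ δ + c / 2 := int_affine _ _
      _ = Gf κ₁ κ₂ δ + 2 * (L/δ)^θ * (1/2:ℝ)^(n+1) := by
          rw [hc, pow_succ]; ring

/-- Uniqueness: the two fixed points integrate all bounded Lipschitz functions equally. -/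
lemma delta_eq_zero {θ : ℝ} (hθ : 0 < θ) (ν κ₁ κ₂ : Measure (EuclideanSpace ℝ (Fin d)))
    [IsProbabilityMeasure ν] [IsProbabilityMeasure κ₁] [IsProbabilityMeasure κ₂]
    (h1 : IsScalarDickman θ ν κ₁) (h2 : IsScalarDickman θ ν κ₂)
    {L : ℝ} (hL : 0 ≤ L) {f : EuclideanSpace ℝ (Fin d) → ℝ} (hf : BL L f) :
    ∫ x, f x ∂κ₁ = ∫ x, f x ∂κ₂ := by
  have key : ∀ δ : ℝ, 0 < δ → |∫ x, f x ∂κ₁ - ∫ x, f x ∂κ₂| ≤ Gf κ₁ κ₂ δ := by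
    intro δ hδ
    have hbound := fun n => main_ind hθ ν κ₁ κ₂ h1 h2 n L hL f hf δ hδ
    have htend : Tendsto (fun n : ℕ => Gf κ₁ κ₂ δ + 2 * (L/δ)^θ * (1/2:ℝ)^n) atTop
        (𝓝 (Gf κ₁ κ₂ δ + 2 * (L/δ)^θ * 0)) :=
      tendsto_const_nhds.add (tendsto_const_nhds.mul
        (tendsto_pow_atTop_nhds_zero_of_lt_one (by norm_num) (by norm_num)))
    have := ge_of_tendsto' htend hbound
    simpa using this
  by_contra hne
  have habs : 0 < |∫ x, f x ∂κ₁ - ∫ x, f x ∂κ₂| := by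
    rw [abs_pos, sub_ne_zero]
    exact hne
  obtain ⟨δ, hδ, hGδ⟩ := Gf_small κ₁ κ₂ (show (0:ℝ) < |∫ x, f x ∂κ₁ - ∫ x, f x ∂κ₂|/2 by linarith)
  have := key δ hδ
  linarith

/-- Probability measures integrating all bounded Lipschitz functions equally are equal. -/
lemma ext_of_BL (κ₁ κ₂ : Measure (EuclideanSpace ℝ (Fin d)))
    [IsProbabilityMeasure κ₁] [IsProbabilityMeasure κ₂]
    (h : ∀ L : ℝ, 0 ≤ L → ∀ f : EuclideanSpace ℝ (Fin d) → ℝ, BL L f →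
      ∫ x, f x ∂κ₁ = ∫ x, f x ∂κ₂) : κ₁ = κ₂ := by
  have hclosed : ∀ F : Set (EuclideanSpace ℝ (Fin d)), IsClosed F → κ₁ F = κ₂ F := by
    intro F hF
    rcases F.eq_empty_or_nonempty with hFe | hFne
    · simp [hFe]
    · set g : ℕ → EuclideanSpace ℝ (Fin d) → ℝ :=
        fun n x => max 0 (1 - (n:ℝ) * Metric.infDist x F) with hg
      have hgBL : ∀ n : ℕ, BL (n : ℝ) (g n) := by
        intro n
        constructor
        · intro x
          rw [abs_le]
          constructor
          · have : (0:ℝ) ≤ max 0 (1 - (n:ℝ) * Metric.infDist x F) := le_max_left _ _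
            linarith
          · refine max_le (by norm_num) ?_
            have h1 : (0:ℝ) ≤ (n:ℝ) * Metric.infDist x F :=
              mul_nonneg (Nat.cast_nonneg n) Metric.infDist_nonneg
            linarith
        · intro x y
          have hd : |Metric.infDist x F - Metric.infDist y F| ≤ dist x y := by
            have := (Metric.lipschitz_infDist_pt (s := F)).dist_le_mul x y
            rwa [Real.dist_eq, NNReal.coe_one, one_mul] at this
          calc |g n x - g n y|
              ≤ |(1 - (n:ℝ) * Metric.infDist x F) - (1 - (n:ℝ) * Metric.infDist y F)| := by
                rw [hg]
                dsimp only
                rw [max_comm 0 _, max_comm 0 _]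
                exact abs_max_sub_max_le_abs _ _ _
            _ = (n:ℝ) * |Metric.infDist x F - Metric.infDist y F| := by
                have harr : (1 - (n:ℝ) * Metric.infDist x F) - (1 - (n:ℝ) * Metric.infDist y F)
                    = -((n:ℝ) * (Metric.infDist x F - Metric.infDist y F)) := by ring
                rw [harr, abs_neg, abs_mul, abs_of_nonneg (Nat.cast_nonneg n : (0:ℝ) ≤ (n:ℝ))]
            _ ≤ (n:ℝ) * ‖x - y‖ := by
                rw [← dist_eq_norm]
                exact mul_le_mul_of_nonneg_left hd (Nat.cast_nonneg n)
      have hgcont : ∀ n : ℕ, Continuous (g n) := fun n =>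
        continuous_const.max (continuous_const.sub
          (continuous_const.mul (Metric.continuous_infDist_pt F)))
      have hgint : ∀ (κ : Measure (EuclideanSpace ℝ (Fin d))) [IsProbabilityMeasure κ],
          ∀ n, Integrable (g n) κ := fun κ _ n =>
        integrable_of_bdd (hgcont n).aestronglyMeasurable (hgBL n).1
      have hglim : ∀ x, Tendsto (fun n => g n x) atTop
          (𝓝 (Set.indicator F (fun _ => (1:ℝ)) x)) := by
        intro x
        by_cases hx : x ∈ F
        · have : ∀ n : ℕ, g n x = 1 := by
            intro n
            rw [hg]
            dsimp only
            rw [Metric.infDist_zero_of_mem hx, mul_zero, sub_zero]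
            exact max_eq_right zero_le_one
          rw [Set.indicator_of_mem hx]
          simp only [this]
          exact tendsto_const_nhds
        · have hdpos : 0 < Metric.infDist x F := (hF.notMem_iff_infDist_pos hFne).mp hx
          rw [Set.indicator_of_notMem hx]
          have hev : ∀ᶠ n : ℕ in atTop, g n x = 0 := by
            obtain ⟨N, hN⟩ := exists_nat_gt (1 / Metric.infDist x F)
            filter_upwards [eventually_ge_atTop N] with n hn
            have hnN : (1:ℝ) / Metric.infDist x F < n :=
              lt_of_lt_of_le hN (by exact_mod_cast hn)
            have : (1:ℝ) ≤ (n:ℝ) * Metric.infDist x F := by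
              rw [div_lt_iff₀ hdpos] at hnN
              linarith
            rw [hg]
            dsimp only
            exact max_eq_left (by linarith)
          exact Tendsto.congr' (hev.mono (fun n hn => hn.symm)) tendsto_const_nhds
      have htend : ∀ (κ : Measure (EuclideanSpace ℝ (Fin d))) [IsProbabilityMeasure κ],
          Tendsto (fun n => ∫ x, g n x ∂κ) atTop (𝓝 ((κ F).toReal)) := by
        intro κ _
        have := tendsto_integral_of_dominated_convergence (μ := κ)
          (F := fun n => g n) (f := Set.indicator F (fun _ => (1:ℝ)))
          (bound := fun _ => 1)
          (fun n => (hgcont n).aestronglyMeasurable)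
          (integrable_const 1)
          (fun n => Eventually.of_forall (fun x => by
            simpa [Real.norm_eq_abs] using (hgBL n).1 x))
          (Eventually.of_forall hglim)
        have hind : ∫ x, Set.indicator F (fun _ => (1:ℝ)) x ∂κ = (κ F).toReal := by
          have := integral_indicator_one (μ := κ) hF.measurableSet
          exact this
        rwa [hind] at this
      have heq : ∀ n, ∫ x, g n x ∂κ₁ = ∫ x, g n x ∂κ₂ :=
        fun n => h (n : ℝ) (Nat.cast_nonneg n) (g n) (hgBL n)
      have h1 := htend κ₁
      have h2 := htend κ₂
      simp only [heq] at h1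
      have := tendsto_nhds_unique h1 h2
      exact (ENNReal.toReal_eq_toReal_iff' (measure_ne_top _ _) (measure_ne_top _ _)).mp this
  refine MeasureTheory.ext_of_generate_finite {s | IsClosed s} ?_ isPiSystem_isClosed
    (fun s hs => hclosed s hs) ?_
  · rw [BorelSpace.measurable_eq (α := EuclideanSpace ℝ (Fin d)),
      borel_eq_generateFrom_isClosed]
  · simp [measure_univ]

end ODAux

/-- If `μ` is the operator Dickman distribution `D((1/θ)I, ν)` and `ν` is invariant under a
linear map `T`, then `μ` is invariant under `T`. -/
theorem opDickman_invariant_of_innovation_invariant {d : ℕ} (θ : ℝ) (hθ : 0 < θ)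
    (ν μ : Measure (EuclideanSpace ℝ (Fin d))) (hν : ClassH ν) [IsProbabilityMeasure μ]
    (hμ : IsScalarDickman θ ν μ)
    (T : EuclideanSpace ℝ (Fin d) →ₗ[ℝ] EuclideanSpace ℝ (Fin d))
    (hT : Measure.map (⇑T) ν = ν) :
    Measure.map (⇑T) μ = μ := by
  have : IsProbabilityMeasure ν := hν.1
  have hTc : Continuous T := T.continuous_of_finiteDimensional
  have hTm : Measurable T := hTc.measurable
  set ρ : Measure (EuclideanSpace ℝ (Fin d)) := Measure.map (⇑T) μ with hρdef
  have : IsProbabilityMeasure ρ := Measure.isProbabilityMeasure_map hTm.aemeasurable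
  set F := (fun p : ℝ × (EuclideanSpace ℝ (Fin d) × EuclideanSpace ℝ (Fin d)) =>
      p.1 ^ (1/θ) • (p.2.1 + p.2.2)) with hF
  have hFm : Measurable F := (ODAux.continuous_dmap hθ).measurable
  have hρ : IsScalarDickman θ ν ρ := by
    show Measure.map F (unif01.prod (ρ.prod ν)) = ρ
    have step1 : ρ.prod ν = Measure.map (Prod.map (⇑T) (⇑T)) (μ.prod ν) := by
      rw [hρdef]
      conv_lhs => rw [← hT]
      exact Measure.map_prod_map μ ν hTm hTm
    have step2 : unif01.prod (ρ.prod ν)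
        = Measure.map (Prod.map id (Prod.map (⇑T) (⇑T))) (unif01.prod (μ.prod ν)) := by
      rw [step1]
      have := Measure.map_prod_map (f := (id : ℝ → ℝ))
        (g := Prod.map (⇑T) (⇑T)) unif01 (μ.prod ν) measurable_id (hTm.prodMap hTm)
      rw [Measure.map_id] at this
      exact this
    rw [step2, Measure.map_map hFm (measurable_id.prodMap (hTm.prodMap hTm))]
    have hcomp : F ∘ (Prod.map id (Prod.map (⇑T) (⇑T))) = (⇑T) ∘ F := by
      funext p
      show p.1 ^ (1/θ) • (T p.2.1 + T p.2.2) = T (p.1 ^ (1/θ) • (p.2.1 + p.2.2))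
      rw [_root_.map_smul, _root_.map_add]
    rw [hcomp, ← Measure.map_map hTm hFm]
    show Measure.map (⇑T) (Measure.map F (unif01.prod (μ.prod ν))) = ρ
    rw [hμ]
  exact ODAux.ext_of_BL ρ μ (fun L hL f hf => ODAux.delta_eq_zero hθ ν ρ μ hρ hμ hL hf)



end
end

section
/- Let Q ∈ M₊, ν ∈ H and c > 0, and let μ be a probability measure on ℝ^d satisfying the fixed-point equation defining D(cQ, ν). Then μ is Q-selfdecomposable: for every t > 0 there exists a probability measure ρ_t on ℝ^d such that μ̂(z) = μ̂( e^{−t Qᵀ} z ) · ρ̂_t(z) for all z ∈ ℝ^d, where Qᵀ is the transpose of Q and e^{−tQᵀ} is the matrix exponential. -/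
open MeasureTheory ProbabilityTheory Matrix Filter Topology

noncomputable section

namespace OpDickmanAux

variable {d : ℕ}

local notation "E" => EuclideanSpace ℝ (Fin d)

/-- Identity cast from plain functions to Euclidean space. -/
abbrev toE (v : Fin d → ℝ) : E := WithLp.toLp 2 v

/-- The integrand of the characteristic function. -/
def ker (z x : E) : ℂ := Complex.exp (Complex.I * ((inner ℝ z x : ℝ) : ℂ))

lemma norm_ker (z x : E) : ‖ker z x‖ = 1 := by
  simp [ker, Complex.norm_exp]

lemma continuous_ker (z : E) : Continuous fun x : E => ker z x :=
  Complex.continuous_exp.comp (continuous_const.mul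
    (Complex.continuous_ofReal.comp (continuous_const.inner continuous_id)))

lemma continuous_ker' (x : E) : Continuous fun z : E => ker z x :=
  Complex.continuous_exp.comp (continuous_const.mul
    (Complex.continuous_ofReal.comp (continuous_id.inner continuous_const)))

lemma charFn_eq (μ : Measure E) (z : E) : charFn μ z = ∫ x, ker z x ∂μ := rfl

lemma norm_charFn_le_one (μ : Measure E) [IsProbabilityMeasure μ] (z : E) :
    ‖charFn μ z‖ ≤ 1 := by
  rw [charFn_eq]
  calc ‖∫ x, ker z x ∂μ‖ ≤ ∫ x, ‖ker z x‖ ∂μ := norm_integral_le_integral_norm _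
  _ = 1 := by
      rw [integral_congr_ae (Filter.Eventually.of_forall fun x => norm_ker z x)]
      simp

lemma integrable_bounded_one {α : Type*} [MeasurableSpace α] (μ : Measure α) [IsFiniteMeasure μ]
    (f : α → ℂ) (hm : AEStronglyMeasurable f μ) (hb : ∀ x, ‖f x‖ ≤ 1) : Integrable f μ :=
  Integrable.mono' (integrable_const 1) hm (Filter.Eventually.of_forall hb)

lemma continuous_charFn (μ : Measure E) [IsProbabilityMeasure μ] :
    Continuous (charFn μ) := by
  show Continuous fun z => ∫ x, ker z x ∂μ
  apply continuous_of_dominated (bound := fun _ => 1)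
  · exact fun z => (continuous_ker z).aestronglyMeasurable
  · exact fun z => Filter.Eventually.of_forall fun x => (norm_ker z x).le
  · exact integrable_const 1
  · exact Filter.Eventually.of_forall fun x => continuous_ker' x

lemma inner_eq_dot (z x : E) : (inner ℝ z x : ℝ) = (fun i => z i) ⬝ᵥ (fun i => x i) := by
  simp [PiLp.inner_apply, RCLike.inner_apply, dotProduct, mul_comm]

lemma inner_mulVec (M : Matrix (Fin d) (Fin d) ℝ) (z x : E) :
    (inner ℝ z (toE (M.mulVec x)) : ℝ) = inner ℝ (toE (Mᵀ.mulVec z)) x := by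
  rw [inner_eq_dot, inner_eq_dot]
  show (fun i => z i) ⬝ᵥ M.mulVec (fun i => x i) = Mᵀ.mulVec (fun i => z i) ⬝ᵥ (fun i => x i)
  rw [Matrix.dotProduct_mulVec, Matrix.mulVec_transpose]

lemma ker_add_right (z x y : E) : ker z (x + y) = ker z x * ker z y := by
  simp only [ker, inner_add_right, Complex.ofReal_add, mul_add, Complex.exp_add]

lemma ker_mulVec (M : Matrix (Fin d) (Fin d) ℝ) (z x : E) :
    ker z (toE (M.mulVec x)) = ker (toE (Mᵀ.mulVec z)) x := by
  unfold ker; rw [inner_mulVec]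

attribute [local instance] Matrix.linftyOpNormedAddCommGroup Matrix.linftyOpNormedRing
  Matrix.linftyOpNormedAlgebra

lemma expM_add (Q : Matrix (Fin d) (Fin d) ℝ) (a b : ℝ) :
    NormedSpace.exp ((a + b) • Q) = NormedSpace.exp (a • Q) * NormedSpace.exp (b • Q) := by
  haveI : CompleteSpace (Matrix (Fin d) (Fin d) ℝ) := FiniteDimensional.complete ℝ _
  rw [add_smul]
  exact Matrix.exp_add_of_commute _ _ (((Commute.refl Q).smul_left a).smul_right b)

lemma expM_transpose (Q : Matrix (Fin d) (Fin d) ℝ) (a : ℝ) :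
    (NormedSpace.exp (a • Q))ᵀ = NormedSpace.exp (a • Qᵀ) := by
  rw [← Matrix.transpose_smul, Matrix.exp_transpose]

lemma continuous_expM (Q : Matrix (Fin d) (Fin d) ℝ) :
    Continuous fun a : ℝ => NormedSpace.exp (a • Q) := by
  haveI : CompleteSpace (Matrix (Fin d) (Fin d) ℝ) := FiniteDimensional.complete ℝ _
  exact NormedSpace.exp_continuous.comp (continuous_id.smul continuous_const)

lemma continuous_act (Q : Matrix (Fin d) (Fin d) ℝ) :
    Continuous fun p : ℝ × E => toE ((NormedSpace.exp (p.1 • Q)).mulVec p.2) := by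
  exact (PiLp.continuous_toLp 2 _).comp (Continuous.matrix_mulVec ((continuous_expM Q).comp continuous_fst)
    ((PiLp.continuous_ofLp 2 _).comp continuous_snd))

instance : IsProbabilityMeasure unif01 := by
  constructor
  rw [unif01, Measure.restrict_apply_univ, Real.volume_Icc]
  norm_num

set_option maxHeartbeats 1000000 in
lemma measurable_dickman_map (Q : Matrix (Fin d) (Fin d) ℝ) :
    Measurable (fun p : ℝ × (E × E) => mAct Q p.1 (p.2.1 + p.2.2)) := by
  have h1 : Measurable fun p : ℝ × (E × E) => (Real.log p.1, p.2.1 + p.2.2) :=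
    (Real.measurable_log.comp measurable_fst).prodMk
      ((measurable_fst.comp measurable_snd).add (measurable_snd.comp measurable_snd))
  have h2 := ((continuous_act Q).measurable).comp h1
  exact h2

/-- Characteristic-function form of the operator Dickman fixed-point equation. -/
lemma charFn_fixedpoint (Q : Matrix (Fin d) (Fin d) ℝ) (ν μ : Measure E)
    [IsProbabilityMeasure μ] [IsProbabilityMeasure ν] (hμ : IsOpDickman Q ν μ) (y : E) :
    charFn μ y = ∫ u in (0:ℝ)..1,
      charFn μ (toE ((NormedSpace.exp (Real.log u • Qᵀ)).mulVec y)) *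
      charFn ν (toE ((NormedSpace.exp (Real.log u • Qᵀ)).mulVec y)) := by
  have hmap : Measure.map (fun p : ℝ × (E × E) => mAct Q p.1 (p.2.1 + p.2.2))
      (unif01.prod (μ.prod ν)) = μ := hμ
  have hT := measurable_dickman_map Q
  conv_lhs => rw [← hmap]
  rw [charFn_eq, integral_map hT.aemeasurable (continuous_ker y).aestronglyMeasurable]
  have hint : Integrable (fun p : ℝ × (E × E) => ker y (mAct Q p.1 (p.2.1 + p.2.2)))
      (unif01.prod (μ.prod ν)) :=
    integrable_bounded_one _ _ (((continuous_ker y).measurable.comp hT).aestronglyMeasurable)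
      (fun p => (norm_ker _ _).le)
  rw [MeasureTheory.integral_prod _ hint]
  have hinner : ∀ u : ℝ, ∫ q : E × E, ker y (mAct Q u (q.1 + q.2)) ∂μ.prod ν =
      charFn μ (toE ((NormedSpace.exp (Real.log u • Qᵀ)).mulVec y)) *
      charFn ν (toE ((NormedSpace.exp (Real.log u • Qᵀ)).mulVec y)) := by
    intro u
    have : ∀ q : E × E, ker y (mAct Q u (q.1 + q.2)) =
        ker (toE ((NormedSpace.exp (Real.log u • Qᵀ)).mulVec y)) q.1 *
        ker (toE ((NormedSpace.exp (Real.log u • Qᵀ)).mulVec y)) q.2 := by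
      intro q
      rw [show mAct Q u (q.1 + q.2) = toE ((mpow Q u).mulVec (q.1 + q.2 : E)) from rfl,
        ker_mulVec, show mpow Q u = NormedSpace.exp (Real.log u • Q) from rfl,
        expM_transpose, ker_add_right]
    simp_rw [this]
    rw [MeasureTheory.integral_prod_mul, charFn_eq, charFn_eq]
  simp_rw [hinner]
  rw [intervalIntegral.integral_of_le zero_le_one, ← MeasureTheory.integral_Icc_eq_integral_Ioc]
  rfl

/-- characteristic function of an additive convolution via map of sum -/
lemma charFn_conv (α β : Measure E) [IsProbabilityMeasure α] [IsProbabilityMeasure β] (z : E) :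
    charFn (Measure.map (fun p : E × E => p.1 + p.2) (α.prod β)) z
      = charFn α z * charFn β z := by
  have hm : Measurable fun p : E × E => p.1 + p.2 := measurable_fst.add measurable_snd
  rw [charFn_eq, integral_map hm.aemeasurable (continuous_ker z).aestronglyMeasurable]
  simp_rw [ker_add_right]
  rw [MeasureTheory.integral_prod_mul, charFn_eq, charFn_eq]

/-- n-fold convolution power -/
def convPow (κ : Measure E) : ℕ → Measure E
  | 0 => Measure.dirac 0
  | n+1 => Measure.map (fun p : E × E => p.1 + p.2) ((convPow κ n).prod κ)

instance convPow_prob (κ : Measure E) [IsProbabilityMeasure κ] (n : ℕ) :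
    IsProbabilityMeasure (convPow κ n) := by
  induction n with
  | zero => exact Measure.dirac.isProbabilityMeasure
  | succ n ih =>
    exact Measure.isProbabilityMeasure_map (measurable_fst.add measurable_snd).aemeasurable

lemma charFn_convPow (κ : Measure E) [IsProbabilityMeasure κ] (n : ℕ) (z : E) :
    charFn (convPow κ n) z = (charFn κ z) ^ n := by
  induction n with
  | zero =>
    rw [convPow, charFn_eq, integral_dirac, pow_zero]
    simp [ker]
  | succ n ih =>
    rw [convPow, charFn_conv, ih, pow_succ]

/-- the compound Poisson measure -/
def cpois (lam : ℝ) (κ : Measure E) : Measure E :=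
  Measure.sum fun n : ℕ =>
    (ENNReal.ofReal (Real.exp (-lam) * lam ^ n / n.factorial)) • convPow κ n

lemma cpois_coeff_sum (lam : ℝ) :
    ∑' n : ℕ, (Real.exp (-lam) * lam ^ n / n.factorial) = 1 := by
  have hexp : ∑' n : ℕ, lam ^ n / (n.factorial : ℝ) = Real.exp lam := by
    rw [Real.exp_eq_exp_ℝ, NormedSpace.exp_eq_tsum ℝ]
    congr 1; funext n
    rw [smul_eq_mul]; ring
  calc ∑' n : ℕ, (Real.exp (-lam) * lam ^ n / n.factorial)
      = ∑' n : ℕ, Real.exp (-lam) * (lam ^ n / n.factorial) := by congr 1; funext n; ring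
    _ = Real.exp (-lam) * ∑' n : ℕ, (lam ^ n / n.factorial) := tsum_mul_left
    _ = 1 := by rw [hexp, ← Real.exp_add]; simp

lemma cpois_prob (lam : ℝ) (hl : 0 ≤ lam) (κ : Measure E) [IsProbabilityMeasure κ] :
    IsProbabilityMeasure (cpois lam κ) := by
  constructor
  rw [cpois, Measure.sum_apply _ MeasurableSet.univ]
  have : ∀ n : ℕ, ((ENNReal.ofReal (Real.exp (-lam) * lam ^ n / n.factorial)) • convPow κ n)
      Set.univ = ENNReal.ofReal (Real.exp (-lam) * lam ^ n / n.factorial) := by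
    intro n
    rw [Measure.smul_apply, measure_univ, smul_eq_mul, mul_one]
  simp_rw [this]
  have hnn : ∀ n : ℕ, 0 ≤ Real.exp (-lam) * lam ^ n / n.factorial := fun n => by positivity
  have hsum : Summable fun n : ℕ => Real.exp (-lam) * lam ^ n / n.factorial := by
    have : (fun n : ℕ => Real.exp (-lam) * lam ^ n / n.factorial)
        = fun n : ℕ => Real.exp (-lam) * (lam ^ n / n.factorial) := by funext n; ring
    rw [this]
    exact (Real.summable_pow_div_factorial lam).mul_left _
  rw [← ENNReal.ofReal_tsum_of_nonneg hnn hsum, cpois_coeff_sum lam]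
  exact ENNReal.ofReal_one

lemma charFn_cpois (lam : ℝ) (hl : 0 ≤ lam) (κ : Measure E) [IsProbabilityMeasure κ] (z : E) :
    charFn (cpois lam κ) z
      = (Real.exp (-lam) : ℂ) * Complex.exp ((lam : ℂ) * charFn κ z) := by
  haveI := cpois_prob lam hl κ
  have hker : Integrable (fun x => ker z x) (cpois lam κ) :=
    integrable_bounded_one _ _ (continuous_ker z).aestronglyMeasurable fun x => (norm_ker z x).le
  rw [charFn_eq]
  rw [cpois] at hker ⊢
  rw [MeasureTheory.integral_sum_measure hker]
  have hterm : ∀ n : ℕ, ∫ x, ker z x ∂((ENNReal.ofReal (Real.exp (-lam) * lam ^ n / n.factorial))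
      • convPow κ n) = (Real.exp (-lam) : ℂ) * (((lam : ℂ) * charFn κ z) ^ n / n.factorial) := by
    intro n
    rw [MeasureTheory.integral_smul_measure, ENNReal.toReal_ofReal (by positivity),
      ← charFn_eq, charFn_convPow]
    push_cast
    rw [Complex.real_smul]
    push_cast
    rw [mul_pow]
    ring
  simp_rw [hterm]
  rw [tsum_mul_left]
  congr 1
  rw [Complex.exp_eq_exp_ℂ, NormedSpace.exp_eq_tsum ℂ]
  congr 1; funext n
  rw [smul_eq_mul]
  ring


/-- the vector `e^{sQᵀ} z` -/
def vA (Q : Matrix (Fin d) (Fin d) ℝ) (s : ℝ) (z : E) : E :=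
  toE ((NormedSpace.exp (s • Qᵀ)).mulVec z)

lemma continuous_vA (Q : Matrix (Fin d) (Fin d) ℝ) (z : E) :
    Continuous fun s : ℝ => vA Q s z := by
  have h1 : Continuous fun w : Matrix (Fin d) (Fin d) ℝ => toE (w.mulVec z) :=
    (PiLp.continuous_toLp 2 _).comp (Continuous.matrix_mulVec continuous_id continuous_const)
  exact h1.comp (continuous_expM Qᵀ)

lemma vA_zero (Q : Matrix (Fin d) (Fin d) ℝ) (z : E) : vA Q 0 z = z := by
  rw [vA, zero_smul, NormedSpace.exp_zero, Matrix.one_mulVec]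

/-- `s ↦ μ̂(e^{-sQᵀ} z)` -/
def fFn (μ : Measure E) (Q : Matrix (Fin d) (Fin d) ℝ) (z : E) (s : ℝ) : ℂ :=
  charFn μ (vA Q (-s) z)

lemma continuous_fFn (μ : Measure E) [IsProbabilityMeasure μ] (Q : Matrix (Fin d) (Fin d) ℝ)
    (z : E) : Continuous (fFn μ Q z) :=
  (continuous_charFn μ).comp ((continuous_vA Q z).comp continuous_neg)

/-- `v ↦ μ̂(e^{(c log v)Qᵀ} z) ν̂(e^{(c log v)Qᵀ} z)` -/
def FFn (μ ν : Measure E) (Q : Matrix (Fin d) (Fin d) ℝ) (c : ℝ) (z : E) (v : ℝ) : ℂ :=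
  charFn μ (vA Q (c * Real.log v) z) * charFn ν (vA Q (c * Real.log v) z)

lemma measurable_FFn (μ ν : Measure E) [IsProbabilityMeasure μ] [IsProbabilityMeasure ν]
    (Q : Matrix (Fin d) (Fin d) ℝ) (c : ℝ) (z : E) : Measurable (FFn μ ν Q c z) := by
  have h1 : Continuous fun s : ℝ => charFn μ (vA Q s z) * charFn ν (vA Q s z) :=
    ((continuous_charFn μ).comp (continuous_vA Q z)).mul
      ((continuous_charFn ν).comp (continuous_vA Q z))
  exact h1.measurable.comp (measurable_const.mul Real.measurable_log)

lemma norm_FFn_le_one (μ ν : Measure E) [IsProbabilityMeasure μ] [IsProbabilityMeasure ν]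
    (Q : Matrix (Fin d) (Fin d) ℝ) (c : ℝ) (z : E) (v : ℝ) : ‖FFn μ ν Q c z v‖ ≤ 1 := by
  rw [FFn, norm_mul]
  exact mul_le_one₀ (norm_charFn_le_one μ _) (norm_nonneg _) (norm_charFn_le_one ν _)

lemma continuousAt_FFn (μ ν : Measure E) [IsProbabilityMeasure μ] [IsProbabilityMeasure ν]
    (Q : Matrix (Fin d) (Fin d) ℝ) (c : ℝ) (z : E) {b : ℝ} (hb : 0 < b) :
    ContinuousAt (FFn μ ν Q c z) b := by
  have h1 : Continuous fun s : ℝ => charFn μ (vA Q s z) * charFn ν (vA Q s z) :=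
    ((continuous_charFn μ).comp (continuous_vA Q z)).mul
      ((continuous_charFn ν).comp (continuous_vA Q z))
  exact h1.continuousAt.comp (continuousAt_const.mul (Real.continuousAt_log hb.ne'))

lemma intervalIntegrable_FFn (μ ν : Measure E) [IsProbabilityMeasure μ] [IsProbabilityMeasure ν]
    (Q : Matrix (Fin d) (Fin d) ℝ) (c : ℝ) (z : E) (a b : ℝ) :
    IntervalIntegrable (FFn μ ν Q c z) volume a b := by
  refine (intervalIntegrable_const (c := (1:ℂ))).mono_fun
    ((measurable_FFn μ ν Q c z).aestronglyMeasurable) ?_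
  refine Filter.Eventually.of_forall fun v => ?_
  simpa using norm_FFn_le_one μ ν Q c z v

/-- `a ↦ ∫_0^a F` -/
def GFn (μ ν : Measure E) (Q : Matrix (Fin d) (Fin d) ℝ) (c : ℝ) (z : E) (a : ℝ) : ℂ :=
  ∫ v in (0:ℝ)..a, FFn μ ν Q c z v

lemma hasDerivAt_GFn (μ ν : Measure E) [IsProbabilityMeasure μ] [IsProbabilityMeasure ν]
    (Q : Matrix (Fin d) (Fin d) ℝ) (c : ℝ) (z : E) {b : ℝ} (hb : 0 < b) :
    HasDerivAt (GFn μ ν Q c z) (FFn μ ν Q c z b) b :=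
  intervalIntegral.integral_hasDerivAt_right (intervalIntegrable_FFn μ ν Q c z 0 b)
    ((measurable_FFn μ ν Q c z).stronglyMeasurable.stronglyMeasurableAtFilter)
    (continuousAt_FFn μ ν Q c z hb)

/-- `s ↦ ∫_0^s ν̂(e^{-rQᵀ} z) dr` -/
def KFn (ν : Measure E) (Q : Matrix (Fin d) (Fin d) ℝ) (z : E) (s : ℝ) : ℂ :=
  ∫ r in (0:ℝ)..s, fFn ν Q z r

lemma hasDerivAt_KFn (ν : Measure E) [IsProbabilityMeasure ν] (Q : Matrix (Fin d) (Fin d) ℝ)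
    (z : E) (s : ℝ) : HasDerivAt (KFn ν Q z) (fFn ν Q z s) s :=
  intervalIntegral.integral_hasDerivAt_right
    ((continuous_fFn ν Q z).intervalIntegrable 0 s)
    ((continuous_fFn ν Q z).stronglyMeasurableAtFilter volume _)
    (continuous_fFn ν Q z).continuousAt

/-- The rescaled fixed-point identity: `G(e^{-s/c}) = e^{-s/c} f(s)`. -/
lemma GFn_exp_eq (Q : Matrix (Fin d) (Fin d) ℝ) {c : ℝ} (ν μ : Measure E)
    [IsProbabilityMeasure μ] [IsProbabilityMeasure ν] (hc : 0 < c) (hμ : IsOpDickman (c • Q) ν μ) (z : E) (s : ℝ) :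
    GFn μ ν Q c z (Real.exp (-s / c)) = (Real.exp (-s / c) : ℂ) * fFn μ Q z s := by
  have hepos : 0 < Real.exp (-s / c) := Real.exp_pos _
  have h1 := charFn_fixedpoint (c • Q) ν μ hμ (vA Q (-s) z)
  have h2 : ∀ u : ℝ, u ∈ Set.Ioc (0:ℝ) 1 →
      charFn μ (toE ((NormedSpace.exp (Real.log u • (c • Q)ᵀ)).mulVec (vA Q (-s) z))) *
      charFn ν (toE ((NormedSpace.exp (Real.log u • (c • Q)ᵀ)).mulVec (vA Q (-s) z)))
      = FFn μ ν Q c z (u * Real.exp (-s / c)) := by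
    intro u hu
    have hmat : NormedSpace.exp (Real.log u • (c • Q)ᵀ) *
        NormedSpace.exp ((-s) • Qᵀ) =
        NormedSpace.exp ((c * Real.log (u * Real.exp (-s / c))) • Qᵀ) := by
      rw [Matrix.transpose_smul, smul_smul, ← expM_add Qᵀ (Real.log u * c) (-s)]
      congr 2
      rw [Real.log_mul hu.1.ne' hepos.ne', Real.log_exp]
      field_simp
    have hvec : toE ((NormedSpace.exp (Real.log u • (c • Q)ᵀ)).mulVec (vA Q (-s) z))
        = vA Q (c * Real.log (u * Real.exp (-s / c))) z := by
      show toE ((NormedSpace.exp (Real.log u • (c • Q)ᵀ)).mulVec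
        ((NormedSpace.exp ((-s) • Qᵀ)).mulVec z)) = _
      rw [Matrix.mulVec_mulVec, hmat]
      rfl
    exact congrArg₂ (fun a b => a * b) (congrArg (charFn μ) hvec) (congrArg (charFn ν) hvec)
  have h3 : (∫ u in (0:ℝ)..1,
      charFn μ (toE ((NormedSpace.exp (Real.log u • (c • Q)ᵀ)).mulVec (vA Q (-s) z))) *
      charFn ν (toE ((NormedSpace.exp (Real.log u • (c • Q)ᵀ)).mulVec (vA Q (-s) z))))
      = ∫ u in (0:ℝ)..1, FFn μ ν Q c z (u * Real.exp (-s / c)) := by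
    refine intervalIntegral.integral_congr_ae ?_
    refine Filter.Eventually.of_forall fun u hu => ?_
    exact h2 u (by rwa [Set.uIoc_of_le zero_le_one] at hu)
  have h4 : (∫ u in (0:ℝ)..1, FFn μ ν Q c z (u * Real.exp (-s / c)))
      = (Real.exp (-s / c))⁻¹ • GFn μ ν Q c z (Real.exp (-s / c)) := by
    rw [intervalIntegral.integral_comp_mul_right (FFn μ ν Q c z) hepos.ne', zero_mul, one_mul]
    rfl
  have h5 : fFn μ Q z s
      = (Real.exp (-s / c))⁻¹ • GFn μ ν Q c z (Real.exp (-s / c)) :=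
    h1.trans (h3.trans h4)
  rw [h5, Complex.real_smul, ← mul_assoc, ← Complex.ofReal_mul,
    mul_inv_cancel₀ hepos.ne', Complex.ofReal_one, one_mul]

/-- Solving the ODE: `e^{-t/c} f(t) exp((1/c)∫_0^t g) = f(0) = μ̂(z)`. -/
lemma key_identity (Q : Matrix (Fin d) (Fin d) ℝ) {c : ℝ} (ν μ : Measure E)
    [IsProbabilityMeasure μ] [IsProbabilityMeasure ν] (hc : 0 < c) (hμ : IsOpDickman (c • Q) ν μ) (z : E) (t : ℝ) :
    (Real.exp (-t / c) : ℂ) * fFn μ Q z t * Complex.exp ((1/(c:ℂ)) * KFn ν Q z t)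
      = charFn μ z := by
  set H : ℝ → ℂ := fun s => GFn μ ν Q c z (Real.exp (-s / c)) *
    Complex.exp ((1/(c:ℂ)) * KFn ν Q z s) with hHdef
  have hderiv : ∀ s : ℝ, HasDerivAt H 0 s := by
    intro s
    have hb : 0 < Real.exp (-s / c) := Real.exp_pos _
    have h0 : HasDerivAt (fun s : ℝ => -s / c) (-1 / c) s := by
      simpa using ((hasDerivAt_id s).neg.div_const c)
    have hphi : HasDerivAt (fun s : ℝ => Real.exp (-s / c))
        (Real.exp (-s / c) * (-1 / c)) s := h0.exp
    have hGc : HasDerivAt (fun s : ℝ => GFn μ ν Q c z (Real.exp (-s / c)))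
        ((Real.exp (-s / c) * (-1 / c)) • FFn μ ν Q c z (Real.exp (-s / c))) s :=
      HasDerivAt.scomp s (hasDerivAt_GFn μ ν Q c z hb) hphi
    have hE : HasDerivAt (fun s : ℝ => Complex.exp ((1/(c:ℂ)) * KFn ν Q z s))
        (Complex.exp ((1/(c:ℂ)) * KFn ν Q z s) * ((1/(c:ℂ)) * fFn ν Q z s)) s :=
      ((hasDerivAt_KFn ν Q z s).const_mul (1/(c:ℂ))).cexp
    have hmul := hGc.mul hE
    have hFphi : FFn μ ν Q c z (Real.exp (-s / c)) = fFn μ Q z s * fFn ν Q z s := by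
      rw [FFn, fFn, fFn]
      have harg : c * Real.log (Real.exp (-s / c)) = -s := by
        rw [Real.log_exp, mul_comm c, div_mul_cancel₀ _ hc.ne']
      rw [harg]
    have hGphi : GFn μ ν Q c z (Real.exp (-s / c))
        = (Real.exp (-s / c) : ℂ) * fFn μ Q z s := GFn_exp_eq Q ν μ hc hμ z s
    have hzero : ((Real.exp (-s / c) * (-1 / c)) • FFn μ ν Q c z (Real.exp (-s / c))) *
        Complex.exp ((1/(c:ℂ)) * KFn ν Q z s) +
        GFn μ ν Q c z (Real.exp (-s / c)) *
        (Complex.exp ((1/(c:ℂ)) * KFn ν Q z s) * ((1/(c:ℂ)) * fFn ν Q z s)) = 0 := by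
      rw [hFphi, hGphi, Complex.real_smul]
      push_cast
      ring
    rw [hzero] at hmul
    exact hmul
  have hconst := is_const_of_deriv_eq_zero (fun x => (hderiv x).differentiableAt)
    (fun x => (hderiv x).deriv) t 0
  have hH0 : H 0 = charFn μ z := by
    rw [hHdef]
    simp only
    have hK0 : KFn ν Q z 0 = 0 := intervalIntegral.integral_same
    rw [hK0, mul_zero, Complex.exp_zero, mul_one, GFn_exp_eq Q ν μ hc hμ z 0]
    have hf0 : fFn μ Q z 0 = charFn μ z := by
      rw [fFn, neg_zero, vA_zero]
    rw [hf0]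
    norm_num
  have hHt : H t = (Real.exp (-t / c) : ℂ) * fFn μ Q z t *
      Complex.exp ((1/(c:ℂ)) * KFn ν Q z t) := by
    rw [hHdef]
    simp only
    rw [GFn_exp_eq Q ν μ hc hμ z t]
  rw [← hHt, hconst, hH0]

set_option maxHeartbeats 1000000 in
/-- Characteristic function of the jump distribution `κ_t`. -/
lemma charFn_kappa (Q : Matrix (Fin d) (Fin d) ℝ) (ν : Measure E)
    [IsProbabilityMeasure ν] (t : ℝ) (ht : 0 < t) (z : E) :
    charFn (Measure.map (fun p : ℝ × E =>
        toE ((NormedSpace.exp ((-(t * p.1)) • Q)).mulVec p.2)) (unif01.prod ν)) z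
      = t⁻¹ • KFn ν Q z t := by
  have hcont : Continuous fun p : ℝ × E =>
      toE ((NormedSpace.exp ((-(t * p.1)) • Q)).mulVec p.2) := by
    have h1 : Continuous fun p : ℝ × E => (-(t * p.1), p.2) :=
      ((continuous_const.mul continuous_fst).neg).prodMk continuous_snd
    have h2 := (continuous_act Q).comp h1
    exact h2
  rw [charFn_eq, integral_map hcont.measurable.aemeasurable
    (continuous_ker z).aestronglyMeasurable]
  have hint : Integrable (fun p : ℝ × E =>
      ker z (toE ((NormedSpace.exp ((-(t * p.1)) • Q)).mulVec p.2))) (unif01.prod ν) :=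
    integrable_bounded_one _ _ (((continuous_ker z).comp hcont).aestronglyMeasurable)
      (fun p => (norm_ker _ _).le)
  rw [MeasureTheory.integral_prod _ hint]
  have hinner : ∀ u : ℝ, (∫ w, ker z (toE ((NormedSpace.exp ((-(t * u)) • Q)).mulVec w)) ∂ν)
      = fFn ν Q z (t * u) := by
    intro u
    have hpt : ∀ w : E, ker z (toE ((NormedSpace.exp ((-(t * u)) • Q)).mulVec w))
        = ker (vA Q (-(t * u)) z) w := by
      intro w
      rw [ker_mulVec, expM_transpose]
      rfl
    simp_rw [hpt]
    rw [← charFn_eq]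
    rfl
  simp_rw [hinner]
  have hIcc : (∫ u, fFn ν Q z (t * u) ∂unif01) = ∫ u in (0:ℝ)..1, fFn ν Q z (t * u) := by
    rw [intervalIntegral.integral_of_le zero_le_one, ← MeasureTheory.integral_Icc_eq_integral_Ioc]
    rfl
  rw [hIcc, intervalIntegral.integral_comp_mul_left (fFn ν Q z) ht.ne', mul_zero, mul_one]
  rfl

end OpDickmanAux

open OpDickmanAux

/-- Any operator Dickman distribution `D(cQ, ν)` with `c > 0` is `Q`-selfdecomposable: for every
`t > 0` there is a probability measure `ρ_t` with `μ̂(z) = μ̂(e^{-tQᵀ} z) ρ̂_t(z)` for all `z`. -/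
theorem opDickman_selfdecomposable {d : ℕ} (Q : Matrix (Fin d) (Fin d) ℝ) (hQ : MPlus Q)
    (c : ℝ) (hc : 0 < c) (ν μ : Measure (EuclideanSpace ℝ (Fin d))) (hν : ClassH ν)
    [IsProbabilityMeasure μ] (hμ : IsOpDickman (c • Q) ν μ) :
    ∀ t : ℝ, 0 < t → ∃ ρ : Measure (EuclideanSpace ℝ (Fin d)), IsProbabilityMeasure ρ ∧
      ∀ z : EuclideanSpace ℝ (Fin d),
        charFn μ z
          = charFn μ (WithLp.toLp 2 ((NormedSpace.exp ((-t) • Q.transpose)).mulVec z)) * charFn ρ z := by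
  intro t ht
  haveI hnuP : IsProbabilityMeasure ν := hν.1
  set κ : Measure (EuclideanSpace ℝ (Fin d)) :=
    Measure.map (fun p : ℝ × EuclideanSpace ℝ (Fin d) =>
      toE ((NormedSpace.exp ((-(t * p.1)) • Q)).mulVec p.2)) (unif01.prod ν) with hkdef
  have hkcont : Continuous fun p : ℝ × EuclideanSpace ℝ (Fin d) =>
      toE ((NormedSpace.exp ((-(t * p.1)) • Q)).mulVec p.2) := by
    have h1 : Continuous fun p : ℝ × EuclideanSpace ℝ (Fin d) => (-(t * p.1), p.2) :=
      ((continuous_const.mul continuous_fst).neg).prodMk continuous_snd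
    have h2 := (continuous_act Q).comp h1
    exact h2
  haveI hkP : IsProbabilityMeasure κ := Measure.isProbabilityMeasure_map hkcont.measurable.aemeasurable
  refine ⟨cpois (t/c) κ, cpois_prob _ (by positivity) κ, fun z => ?_⟩
  have hm : charFn κ z = t⁻¹ • KFn ν Q z t := charFn_kappa Q ν t ht z
  rw [charFn_cpois _ (by positivity) κ z, hm]
  have harg : ((t/c : ℝ) : ℂ) * ((t⁻¹ : ℝ) • KFn ν Q z t) = (1/(c:ℂ)) * KFn ν Q z t := by
    rw [Complex.real_smul, ← mul_assoc]
    congr 1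
    push_cast
    rw [div_mul_eq_mul_div, mul_inv_cancel₀ (show (t:ℂ) ≠ 0 by exact_mod_cast ht.ne')]
  rw [harg]
  have hmuz : charFn μ (WithLp.toLp 2 ((NormedSpace.exp ((-t) • Q.transpose)).mulVec z)) = fFn μ Q z t := rfl
  rw [hmuz, ← key_identity Q ν μ hc hμ z t,
    show -(t/c) = -t/c from (neg_div c t).symm]
  ring


end
end

section
/- Let θ > 0, let μ be the Gamma distribution on ℝ with shape parameter θ and rate 1 (density x^{θ−1} e^{−x}/Γ(θ) on (0,∞)), and let ν be the exponential distribution with rate 1 (density e^{−x} on (0,∞)). Then μ satisfies the one-dimensional operator Dickman fixed-point equation with Q = 1/θ: if U is uniform on [0,1], X has law μ and W has law ν, all mutually independent, then the law of U^{1/θ}(X + W) equals μ. That is, the Gamma(θ,1) distribution is the Dickman-type distribution D(1/θ, Exp(1)). -/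
open MeasureTheory ProbabilityTheory Matrix Filter Topology

noncomputable section

section DickmanAux

open MeasureTheory ProbabilityTheory Real Set

lemma my_lintegral_image_deriv {s : Set ℝ} {f f' : ℝ → ℝ} (hs : MeasurableSet s)
    (hf' : ∀ x ∈ s, HasDerivWithinAt f (f' x) s x) (hf : Set.InjOn f s) (g : ℝ → ENNReal) :
    ∫⁻ x in f '' s, g x = ∫⁻ x in s, ENNReal.ofReal |f' x| * g (f x) := by
  simpa only [ContinuousLinearMap.det_toSpanSingleton] using
    lintegral_image_eq_lintegral_abs_det_fderiv_mul volume hs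
      (fun x hx => (hf' x hx).hasFDerivWithinAt) hf g


lemma ae_ne_zero : ∀ᵐ y : ℝ ∂volume, y ≠ 0 := by
  refine ae_iff.mpr ?_
  rw [show {a : ℝ | ¬a ≠ 0} = {0} by ext a; simp]
  exact measure_singleton 0


lemma measurable_gammaPDF (a r : ℝ) : Measurable (gammaPDF a r) :=
  (measurable_gammaPDFReal a r).ennreal_ofReal


lemma conv_gamma_exp {θ : ℝ} (hθ : 0 < θ) {t : ℝ} (ht : t ≠ 0) :
    ∫⁻ x, gammaPDF θ 1 x * gammaPDF 1 1 (t - x) = gammaPDF (θ + 1) 1 t := by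
  rcases ht.lt_or_gt with htneg | htpos
  · rw [gammaPDF_of_neg htneg]
    have : ∀ x : ℝ, gammaPDF θ 1 x * gammaPDF 1 1 (t - x) = 0 := by
      intro x
      rcases lt_or_ge x 0 with hx | hx
      · rw [gammaPDF_of_neg hx, zero_mul]
      · rw [gammaPDF_of_neg (by linarith : t - x < 0), mul_zero]
    simp [this]
  · -- positive case
    have hΓ : 0 < Real.Gamma θ := Real.Gamma_pos_of_pos hθ
    have hvanish : ∀ x : ℝ, x ∉ Icc 0 t → gammaPDF θ 1 x * gammaPDF 1 1 (t - x) = 0 := by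
      intro x hx
      rcases lt_or_ge x 0 with h | h
      · rw [gammaPDF_of_neg h, zero_mul]
      · have : t < x := by
          by_contra hc
          exact hx ⟨h, not_lt.mp hc⟩
        rw [gammaPDF_of_neg (by linarith : t - x < 0), mul_zero]
    have step1 : ∫⁻ x, gammaPDF θ 1 x * gammaPDF 1 1 (t - x)
        = ∫⁻ x in Icc 0 t, gammaPDF θ 1 x * gammaPDF 1 1 (t - x) := by
      rw [← lintegral_indicator measurableSet_Icc]
      congr 1
      funext x
      by_cases hx : x ∈ Icc 0 t
      · rw [Set.indicator_of_mem hx]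
      · rw [Set.indicator_of_notMem hx, hvanish x hx]
    have step2 : ∫⁻ x in Icc 0 t, gammaPDF θ 1 x * gammaPDF 1 1 (t - x)
        = ∫⁻ x in Icc 0 t, ENNReal.ofReal (Real.exp (-t) / Real.Gamma θ * x ^ (θ - 1)) := by
      refine setLIntegral_congr_fun_ae measurableSet_Icc (ae_of_all _ fun x hx => ?_)
      obtain ⟨hx0, hxt⟩ := hx
      rw [gammaPDF_of_nonneg hx0, gammaPDF_of_nonneg (by linarith : (0:ℝ) ≤ t - x),
        ← ENNReal.ofReal_mul (by positivity)]
      congr 1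
      have hexp : Real.exp (-(1 * x)) * Real.exp (-(1 * (t - x))) = Real.exp (-t) := by
        rw [← Real.exp_add]; congr 1; ring
      rw [Real.one_rpow, Real.Gamma_one, sub_self, Real.rpow_zero, Real.one_rpow]
      linear_combination (x ^ (θ - 1) / Real.Gamma θ) * hexp
    have hint : IntegrableOn (fun x : ℝ => Real.exp (-t) / Real.Gamma θ * x ^ (θ - 1))
        (Icc 0 t) := by
      rw [integrableOn_Icc_iff_integrableOn_Ioc]
      have := (intervalIntegral.intervalIntegrable_rpow' (a := 0) (b := t)
        (by linarith : (-1:ℝ) < θ - 1)).const_mul (Real.exp (-t) / Real.Gamma θ)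
      simpa [intervalIntegrable_iff_integrableOn_Ioc_of_le htpos.le] using this
    have step3 : ∫⁻ x in Icc 0 t, ENNReal.ofReal (Real.exp (-t) / Real.Gamma θ * x ^ (θ - 1))
        = ENNReal.ofReal (Real.exp (-t) / Real.Gamma θ * (t ^ θ / θ)) := by
      rw [← ofReal_integral_eq_lintegral_ofReal hint
        ((ae_restrict_iff' measurableSet_Icc).mpr (ae_of_all _ fun x hx =>
          mul_nonneg (by positivity) (Real.rpow_nonneg hx.1 _)))]
      congr 1
      rw [integral_Icc_eq_integral_Ioc, ← intervalIntegral.integral_of_le htpos.le,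
        intervalIntegral.integral_const_mul, integral_rpow (Or.inl (by linarith)),
        sub_add_cancel, Real.zero_rpow hθ.ne', sub_zero]
    rw [step1, step2, step3, gammaPDF_of_nonneg htpos.le, Real.one_rpow,
      Real.Gamma_add_one hθ.ne']
    congr 1
    rw [add_sub_cancel_right]
    field_simp

lemma mix_gamma {θ : ℝ} (hθ : 0 < θ) {t : ℝ} (ht : t ≠ 0) :
    ∫⁻ u in Ioo (0:ℝ) 1,
      ENNReal.ofReal (u ^ (-(1/θ))) * gammaPDF (θ + 1) 1 (t * u ^ (-(1/θ)))
      = gammaPDF θ 1 t := by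
  have hΓ : 0 < Real.Gamma θ := Real.Gamma_pos_of_pos hθ
  rcases ht.lt_or_gt with htneg | htpos
  · rw [gammaPDF_of_neg htneg,
      setLIntegral_congr_fun_ae measurableSet_Ioo (ae_of_all _ fun u hu => ?_), lintegral_zero]
    rw [gammaPDF_of_neg (by
      have : (0:ℝ) < u ^ (-(1/θ)) := Real.rpow_pos_of_pos hu.1 _
      nlinarith), mul_zero]
  · set c : ℝ := -(1/θ) with hc
    have hcneg : c < 0 := by rw [hc]; simp; positivity
    set F : ℝ → ℝ := fun u => t * u ^ c with hF
    set F' : ℝ → ℝ := fun u => -(t/θ) * u ^ (c - 1) with hF'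
    have hderiv : ∀ u ∈ Ioo (0:ℝ) 1, HasDerivWithinAt F (F' u) (Ioo (0:ℝ) 1) u := by
      intro u hu
      have h := ((Real.hasDerivAt_rpow_const (x := u) (p := c)
        (Or.inl hu.1.ne')).const_mul t).hasDerivWithinAt (s := Ioo (0:ℝ) 1)
      refine h.congr_deriv ?_
      rw [hF', hc]; ring
    have hinj : Set.InjOn F (Ioo (0:ℝ) 1) := by
      intro a ha b hb hab
      have h1 : a ^ c = b ^ c := mul_left_cancel₀ htpos.ne' hab
      have hcne : c ≠ 0 := hcneg.ne
      exact Real.rpow_left_injOn hcne ha.1.le hb.1.le h1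
    have himg : F '' Ioo (0:ℝ) 1 = Ioi t := by
      ext v
      constructor
      · rintro ⟨u, hu, rfl⟩
        have h1 : 1 < u ^ c := by
          rw [Real.one_lt_rpow_iff_of_pos hu.1]
          exact Or.inr ⟨hu.2, hcneg⟩
        exact (lt_mul_iff_one_lt_right htpos).mpr h1
      · intro hv
        have hv' : 0 < v := htpos.trans hv
        have hdiv : t / v < 1 := (div_lt_one hv').mpr hv
        have hdiv' : 0 < t / v := by positivity
        refine ⟨(t / v) ^ θ, ⟨Real.rpow_pos_of_pos hdiv' _,
          Real.rpow_lt_one hdiv'.le hdiv hθ⟩, ?_⟩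
        show t * ((t / v) ^ θ) ^ c = v
        rw [← Real.rpow_mul hdiv'.le, show θ * c = -1 by rw [hc]; field_simp,
          Real.rpow_neg_one]
        field_simp
    have step1 : ∫⁻ u in Ioo (0:ℝ) 1,
        ENNReal.ofReal (u ^ (-(1/θ))) * gammaPDF (θ + 1) 1 (t * u ^ (-(1/θ)))
        = ∫⁻ u in Ioo (0:ℝ) 1, ENNReal.ofReal |F' u| *
            (ENNReal.ofReal (t ^ (θ - 1) / Real.Gamma θ) * ENNReal.ofReal (Real.exp (-(F u)))) := by
      refine setLIntegral_congr_fun_ae measurableSet_Ioo (ae_of_all _ fun u hu => ?_)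
      have hu0 : 0 < u := hu.1
      have huc : 0 < u ^ c := Real.rpow_pos_of_pos hu0 _
      have harg : 0 ≤ t * u ^ c := by positivity
      have habs : |F' u| = (t/θ) * u ^ (c - 1) := by
        have h1 : (0:ℝ) < u ^ (c - 1) := Real.rpow_pos_of_pos hu0 _
        show |-(t/θ) * u ^ (c - 1)| = (t/θ) * u ^ (c - 1)
        have h2 : (0:ℝ) < t / θ := div_pos htpos hθ
        rw [abs_of_nonpos (by nlinarith [mul_pos h2 h1] : -(t/θ) * u ^ (c - 1) ≤ 0)]
        ring
      rw [gammaPDF_of_nonneg harg, habs, hF,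
        ← ENNReal.ofReal_mul (by positivity), ← ENNReal.ofReal_mul (by positivity),
        ← ENNReal.ofReal_mul (by positivity)]
      congr 1
      have e1 : (t * u ^ c) ^ (θ + 1 - 1) = t ^ θ * u ^ (c * θ) := by
        rw [add_sub_cancel_right, Real.mul_rpow htpos.le huc.le, ← Real.rpow_mul hu0.le]
      have e2 : u ^ (c * θ) = u⁻¹ := by
        rw [show c * θ = -1 by rw [hc]; field_simp, Real.rpow_neg_one]
      have e3 : u ^ (c - 1) = u ^ c / u := by
        rw [Real.rpow_sub hu0, Real.rpow_one]
      have e4 : t ^ θ = t * t ^ (θ - 1) := by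
        rw [Real.rpow_sub htpos, Real.rpow_one]; field_simp
      rw [Real.Gamma_add_one hθ.ne', Real.one_rpow, e1, e2, e3, e4, one_mul]
      field_simp
      ring
    rw [step1, ← my_lintegral_image_deriv measurableSet_Ioo hderiv hinj
      (fun v => ENNReal.ofReal (t ^ (θ - 1) / Real.Gamma θ) * ENNReal.ofReal (Real.exp (-v))),
      himg, lintegral_const_mul' _ _ ENNReal.ofReal_ne_top]
    have hexpint : ∫⁻ v in Ioi t, ENNReal.ofReal (Real.exp (-v)) = ENNReal.ofReal (Real.exp (-t)) := by
      have hint : IntegrableOn (fun v : ℝ => Real.exp (-v)) (Ioi t) := by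
        simpa using exp_neg_integrableOn_Ioi t one_pos
      rw [← ofReal_integral_eq_lintegral_ofReal hint (ae_of_all _ fun v => (Real.exp_pos _).le),
        integral_exp_neg_Ioi]
    rw [hexpint, ← ENNReal.ofReal_mul (by positivity), gammaPDF_of_nonneg htpos.le]
    congr 1
    rw [Real.one_rpow, one_mul]
    ring

lemma map_add_gamma {θ : ℝ} (hθ : 0 < θ) :
    Measure.map (fun p : ℝ × ℝ => p.1 + p.2) ((gammaMeasure θ 1).prod (gammaMeasure 1 1))
      = gammaMeasure (θ + 1) 1 := by
  haveI : IsProbabilityMeasure (gammaMeasure 1 1) := isProbabilityMeasure_gammaMeasure one_pos one_pos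
  ext s hs
  rw [Measure.map_apply (show Measurable fun p : ℝ × ℝ => p.1 + p.2 from measurable_fst.add measurable_snd) hs]
  have hA : MeasurableSet ((fun p : ℝ × ℝ => p.1 + p.2) ⁻¹' s) :=
    (measurable_fst.add measurable_snd) hs
  rw [Measure.prod_apply hA]
  have hmeas : Measurable fun x => (gammaMeasure 1 1) (Prod.mk x ⁻¹' ((fun p : ℝ × ℝ => p.1 + p.2) ⁻¹' s)) :=
    measurable_measure_prodMk_left hA
  rw [gammaMeasure, lintegral_withDensity_eq_lintegral_mul _ (measurable_gammaPDF θ 1) hmeas]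
  have inner_eq : ∀ x : ℝ,
      (gammaMeasure 1 1) (Prod.mk x ⁻¹' ((fun p : ℝ × ℝ => p.1 + p.2) ⁻¹' s))
        = ∫⁻ y, s.indicator (fun _ => (1:ENNReal)) y * gammaPDF 1 1 (y - x) := by
    intro x
    have hB : MeasurableSet {w : ℝ | x + w ∈ s} := (measurable_const.add measurable_id) hs
    have hpre : Prod.mk x ⁻¹' ((fun p : ℝ × ℝ => p.1 + p.2) ⁻¹' s) = {w : ℝ | x + w ∈ s} := rfl
    rw [hpre, gammaMeasure, withDensity_apply _ hB, ← lintegral_indicator hB]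
    have : ∀ w : ℝ, ({w : ℝ | x + w ∈ s}).indicator (gammaPDF 1 1) w
        = (fun y => s.indicator (fun _ => (1:ENNReal)) y * gammaPDF 1 1 (y - x)) (x + w) := by
      intro w
      simp only [Set.indicator_apply, Set.mem_setOf_eq, add_sub_cancel_left]
      by_cases hw : x + w ∈ s <;> simp [hw]
    rw [lintegral_congr this, lintegral_add_left_eq_self
      (fun y => s.indicator (fun _ => (1:ENNReal)) y * gammaPDF 1 1 (y - x)) x]
  calc ∫⁻ x, ((gammaPDF θ 1) * fun x =>
        (gammaMeasure 1 1) (Prod.mk x ⁻¹' ((fun p : ℝ × ℝ => p.1 + p.2) ⁻¹' s))) x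
      = ∫⁻ x, ∫⁻ y, s.indicator (fun _ => (1:ENNReal)) y *
          (gammaPDF θ 1 x * gammaPDF 1 1 (y - x)) := by
        refine lintegral_congr fun x => ?_
        simp only [Pi.mul_apply]
        rw [inner_eq x, ← lintegral_const_mul' _ _ (by
          simp [gammaPDF] : gammaPDF θ 1 x ≠ ⊤)]
        refine lintegral_congr fun y => ?_
        ring
    _ = ∫⁻ y, ∫⁻ x, s.indicator (fun _ => (1:ENNReal)) y *
          (gammaPDF θ 1 x * gammaPDF 1 1 (y - x)) := by
        refine lintegral_lintegral_swap ?_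
        apply Measurable.aemeasurable
        apply Measurable.mul
        · exact ((measurable_indicator_const_iff 1).mpr hs).comp measurable_snd
        · exact ((measurable_gammaPDF θ 1).comp measurable_fst).mul
            ((measurable_gammaPDF 1 1).comp (measurable_snd.sub measurable_fst))
    _ = ∫⁻ y, s.indicator (fun _ => (1:ENNReal)) y * gammaPDF (θ + 1) 1 y := by
        refine lintegral_congr_ae ?_
        filter_upwards [ae_ne_zero] with y hy
        rw [lintegral_const_mul' _ _ (by
          by_cases h : y ∈ s <;> simp [Set.indicator_apply, h] :
            s.indicator (fun _ => (1:ENNReal)) y ≠ ⊤),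
          conv_gamma_exp hθ hy]
    _ = gammaMeasure (θ + 1) 1 s := by
        rw [gammaMeasure, withDensity_apply _ hs, ← lintegral_indicator hs]
        refine lintegral_congr fun y => ?_
        by_cases h : y ∈ s <;> simp [Set.indicator_apply, h]

lemma map_scale_gamma {θ : ℝ} (hθ : 0 < θ) :
    Measure.map (fun p : ℝ × ℝ => p.1 ^ (1/θ) * p.2) (unif01.prod (gammaMeasure (θ + 1) 1))
      = gammaMeasure θ 1 := by
  haveI : IsProbabilityMeasure (gammaMeasure (θ + 1) 1) :=
    isProbabilityMeasure_gammaMeasure (by linarith) one_pos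
  have hmf : Measurable fun p : ℝ × ℝ => p.1 ^ (1/θ) * p.2 :=
    (measurable_fst.pow_const _).mul measurable_snd
  ext s hs
  rw [Measure.map_apply hmf hs]
  have hA : MeasurableSet ((fun p : ℝ × ℝ => p.1 ^ (1/θ) * p.2) ⁻¹' s) := hmf hs
  rw [Measure.prod_apply hA]
  have hunif : unif01 = volume.restrict (Ioo (0:ℝ) 1) := by
    rw [unif01, Measure.restrict_congr_set (Ioo_ae_eq_Icc (μ := volume) (a := (0:ℝ)) (b := 1))]
  rw [hunif]
  have inner_eq : ∀ u ∈ Ioo (0:ℝ) 1,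
      (gammaMeasure (θ + 1) 1) (Prod.mk u ⁻¹' ((fun p : ℝ × ℝ => p.1 ^ (1/θ) * p.2) ⁻¹' s))
        = ∫⁻ y, ENNReal.ofReal (u ^ (-(1/θ))) *
            (s.indicator (fun _ => (1:ENNReal)) y * gammaPDF (θ + 1) 1 (y * u ^ (-(1/θ)))) := by
    intro u hu
    have hc : 0 < u ^ (1/θ) := Real.rpow_pos_of_pos hu.1 _
    set c : ℝ := u ^ (1/θ) with hcdef
    have hB : MeasurableSet {x : ℝ | c * x ∈ s} := (measurable_const_mul c) hs
    have hpre : Prod.mk u ⁻¹' ((fun p : ℝ × ℝ => p.1 ^ (1/θ) * p.2) ⁻¹' s)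
        = {x : ℝ | c * x ∈ s} := rfl
    set G : ℝ → ENNReal := fun y =>
      s.indicator (fun _ => (1:ENNReal)) y * gammaPDF (θ + 1) 1 (c⁻¹ * y) with hG
    have hGmeas : Measurable G :=
      (((measurable_indicator_const_iff 1).mpr hs)).mul
        ((measurable_gammaPDF (θ + 1) 1).comp (measurable_const_mul _))
    have key : ∀ x : ℝ, ({x : ℝ | c * x ∈ s}).indicator (gammaPDF (θ + 1) 1) x = G (c * x) := by
      intro x
      simp only [hG, Set.indicator_apply, Set.mem_setOf_eq]
      rw [inv_mul_cancel_left₀ hc.ne']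
      by_cases hx : c * x ∈ s <;> simp [hx]
    rw [hpre, gammaMeasure, withDensity_apply _ hB, ← lintegral_indicator hB,
      lintegral_congr key]
    have hmap : ∫⁻ x, G (c * x) = ∫⁻ y, G y ∂(Measure.map (fun x => c * x) volume) := by
      rw [lintegral_map hGmeas (measurable_const_mul c)]
    rw [hmap, Real.map_volume_mul_left hc.ne', lintegral_smul_measure]
    have habs : ENNReal.ofReal |c⁻¹| = ENNReal.ofReal (u ^ (-(1/θ))) := by
      rw [abs_of_pos (inv_pos.mpr hc), hcdef, ← Real.rpow_neg hu.1.le]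
    rw [habs, smul_eq_mul, ← lintegral_const_mul' _ _ ENNReal.ofReal_ne_top]
    refine lintegral_congr fun y => ?_
    rw [hG]
    simp only []
    congr 2
    rw [hcdef, ← Real.rpow_neg hu.1.le, mul_comm]
  calc ∫⁻ u in Ioo (0:ℝ) 1,
        (gammaMeasure (θ + 1) 1) (Prod.mk u ⁻¹' ((fun p : ℝ × ℝ => p.1 ^ (1/θ) * p.2) ⁻¹' s))
      = ∫⁻ u in Ioo (0:ℝ) 1, ∫⁻ y, ENNReal.ofReal (u ^ (-(1/θ))) *
          (s.indicator (fun _ => (1:ENNReal)) y * gammaPDF (θ + 1) 1 (y * u ^ (-(1/θ)))) :=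
        setLIntegral_congr_fun measurableSet_Ioo inner_eq
    _ = ∫⁻ y, ∫⁻ u in Ioo (0:ℝ) 1, ENNReal.ofReal (u ^ (-(1/θ))) *
          (s.indicator (fun _ => (1:ENNReal)) y * gammaPDF (θ + 1) 1 (y * u ^ (-(1/θ)))) := by
        refine lintegral_lintegral_swap ?_
        apply Measurable.aemeasurable
        apply Measurable.mul
        · exact ((measurable_fst.pow_const _).ennreal_ofReal)
        · exact (((measurable_indicator_const_iff 1).mpr hs).comp measurable_snd).mul
            ((measurable_gammaPDF (θ + 1) 1).comp
              (measurable_snd.mul (measurable_fst.pow_const _)))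
    _ = ∫⁻ y, s.indicator (fun _ => (1:ENNReal)) y * gammaPDF θ 1 y := by
        refine lintegral_congr_ae ?_
        filter_upwards [ae_ne_zero] with y hy
        by_cases h : y ∈ s
        · simp only [Set.indicator_of_mem h, one_mul]
          exact mix_gamma hθ hy
        · simp [Set.indicator_of_notMem h]
    _ = gammaMeasure θ 1 s := by
        rw [gammaMeasure, withDensity_apply _ hs, ← lintegral_indicator hs]
        refine lintegral_congr fun y => ?_
        by_cases h : y ∈ s <;> simp [Set.indicator_apply, h]

end DickmanAux

/-- The Gamma(θ,1) distribution satisfies the one-dimensional operator Dickman fixed-point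
equation with parameter `1/θ` and innovation law `Exp(1)`: the law of `U^{1/θ}(X + W)` equals
Gamma(θ,1), for `U ~ Unif[0,1]`, `X ~ Gamma(θ,1)`, `W ~ Exp(1)` mutually independent. -/

theorem gamma_isDickman (θ : ℝ) (hθ : 0 < θ) :
    Measure.map (fun p : ℝ × (ℝ × ℝ) => p.1 ^ (1/θ) * (p.2.1 + p.2.2))
      (unif01.prod ((ProbabilityTheory.gammaMeasure θ 1).prod
        (ProbabilityTheory.expMeasure 1)))
      = ProbabilityTheory.gammaMeasure θ 1 := by
  haveI : SFinite unif01 := by unfold unif01; infer_instance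
  haveI i1 : IsProbabilityMeasure (ProbabilityTheory.gammaMeasure θ 1) :=
    ProbabilityTheory.isProbabilityMeasure_gammaMeasure hθ one_pos
  haveI i2 : IsProbabilityMeasure (ProbabilityTheory.gammaMeasure 1 1) :=
    ProbabilityTheory.isProbabilityMeasure_gammaMeasure one_pos one_pos
  have h1 : (fun p : ℝ × (ℝ × ℝ) => p.1 ^ (1/θ) * (p.2.1 + p.2.2))
      = (fun q : ℝ × ℝ => q.1 ^ (1/θ) * q.2) ∘
        (Prod.map id (fun p : ℝ × ℝ => p.1 + p.2)) := rfl
  have hout : Measurable fun q : ℝ × ℝ => q.1 ^ (1/θ) * q.2 :=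
    (measurable_fst.pow_const _).mul measurable_snd
  have hin : Measurable (Prod.map (id : ℝ → ℝ) (fun p : ℝ × ℝ => p.1 + p.2)) :=
    measurable_id.prodMap (measurable_fst.add measurable_snd)
  rw [show ProbabilityTheory.expMeasure 1 = ProbabilityTheory.gammaMeasure 1 1 from rfl,
    h1, ← Measure.map_map hout hin,
    ← Measure.map_prod_map _ _ measurable_id (show Measurable fun p : ℝ × ℝ => p.1 + p.2 from measurable_fst.add measurable_snd),
    Measure.map_id, map_add_gamma hθ, map_scale_gamma hθ]

end
end
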